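/- arXiv:1101.2302 — 4 statements merged into one kernel-verified Lean document; each statement's English description precedes it below -/
import Mathlib

section
/- Let H be a Hilbert space and let (P_n) and (G_n) be sequences of pairwise orthogonal projections of finite rank in H such that ∑ P_n = I and ∑ G_n = I (in the strong operator topology) and ∑_{n=1}^∞ ‖P_n − G_n‖² < ∞. Then there exists N₀ ∈ ℕ such that for all N ≥ N₀, ∑_{n=1}^N rank P_n = ∑_{n=1}^N rank G_n. -/
open scoped InnerProductSpace
open ContinuousLinearMap Filter Finset

noncomputable section AuxRank

variable {H : Type*} [NormedAddCommGroup H] [InnerProductSpace ℂ H] [CompleteSpace H]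

/-- Finite Pythagoras for pairwise orthogonal projections. -/
lemma aux_pyth_sum (P : ℕ → H →L[ℂ] H)
    (hPproj : ∀ n, IsSelfAdjoint (P n) ∧ IsIdempotentElem (P n))
    (hPorth : ∀ m n, m ≠ n → (P m).comp (P n) = 0)
    (s : Finset ℕ) (x : H) :
    ‖∑ n ∈ s, P n x‖ ^ 2 = ∑ n ∈ s, ‖P n x‖ ^ 2 := by
  induction s using Finset.induction_on with
  | empty => simp
  | @insert a s ha ih =>
    rw [Finset.sum_insert ha, Finset.sum_insert ha, norm_add_sq (𝕜 := ℂ), ih]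
    have hz : ⟪P a x, ∑ n ∈ s, P n x⟫_ℂ = 0 := by
      rw [inner_sum]
      refine Finset.sum_eq_zero fun n hn => ?_
      have hne : a ≠ n := fun h => ha (h ▸ hn)
      have h0 : P a (P n x) = 0 := by
        have := congrArg (fun (T : H →L[ℂ] H) => T x) (hPorth a n hne)
        simpa using this
      have hsym : ⟪P a x, P n x⟫_ℂ = ⟪x, P a (P n x)⟫_ℂ := by
        simpa using (hPproj a).1.isSymmetric x (P n x)
      rw [hsym, h0, inner_zero_right]
    rw [hz]
    simp

lemma aux_pyth_hasSum (P : ℕ → H →L[ℂ] H)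
    (hPproj : ∀ n, IsSelfAdjoint (P n) ∧ IsIdempotentElem (P n))
    (hPorth : ∀ m n, m ≠ n → (P m).comp (P n) = 0)
    (x : H) (hPsum : HasSum (fun n => P n x) x) :
    HasSum (fun n => ‖P n x‖ ^ 2) (‖x‖ ^ 2) := by
  have hcont : Continuous (fun v : H => ‖v‖ ^ 2) := by continuity
  have h := (hcont.tendsto x).comp hPsum
  have h2 : Tendsto (fun s : Finset ℕ => ∑ n ∈ s, ‖P n x‖ ^ 2) atTop (nhds (‖x‖ ^ 2)) :=
    h.congr fun s => aux_pyth_sum P hPproj hPorth s x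
  exact h2

/-- Cauchy–Schwarz for tsums of nonnegative reals. -/
lemma aux_tsum_cs (a b : ℕ → ℝ) (ha : ∀ n, 0 ≤ a n) (hb : ∀ n, 0 ≤ b n)
    (ha2 : Summable (fun n => a n ^ 2)) (hb2 : Summable (fun n => b n ^ 2))
    (hab : Summable (fun n => a n * b n)) :
    ∑' n, a n * b n ≤ Real.sqrt (∑' n, a n ^ 2) * Real.sqrt (∑' n, b n ^ 2) := by
  refine Summable.tsum_le_of_sum_le hab fun s => ?_
  have h1 : (∑ n ∈ s, a n * b n) ^ 2 ≤ (∑ n ∈ s, a n ^ 2) * (∑ n ∈ s, b n ^ 2) :=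
    Finset.sum_mul_sq_le_sq_mul_sq s a b
  have h2 : ∑ n ∈ s, a n ^ 2 ≤ ∑' n, a n ^ 2 :=
    Summable.sum_le_tsum s (fun n _ => sq_nonneg _) ha2
  have h3 : ∑ n ∈ s, b n ^ 2 ≤ ∑' n, b n ^ 2 :=
    Summable.sum_le_tsum s (fun n _ => sq_nonneg _) hb2
  have hnn : 0 ≤ ∑ n ∈ s, a n * b n :=
    Finset.sum_nonneg fun n _ => mul_nonneg (ha n) (hb n)
  calc ∑ n ∈ s, a n * b n = Real.sqrt ((∑ n ∈ s, a n * b n) ^ 2) := by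
        rw [Real.sqrt_sq hnn]
    _ ≤ Real.sqrt ((∑' n, a n ^ 2) * (∑' n, b n ^ 2)) := by
        apply Real.sqrt_le_sqrt
        calc (∑ n ∈ s, a n * b n) ^ 2 ≤ (∑ n ∈ s, a n ^ 2) * (∑ n ∈ s, b n ^ 2) := h1
          _ ≤ (∑' n, a n ^ 2) * (∑' n, b n ^ 2) := by
              apply mul_le_mul h2 h3 (Finset.sum_nonneg fun n _ => sq_nonneg _)
              exact le_trans (Finset.sum_nonneg fun n _ => sq_nonneg _) h2
    _ = Real.sqrt (∑' n, a n ^ 2) * Real.sqrt (∑' n, b n ^ 2) :=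
        Real.sqrt_mul (tsum_nonneg fun n => sq_nonneg _) _

/-- Range of a sum of two "orthogonal" idempotents. -/
lemma aux_range_add (A B : H →L[ℂ] H)
    (hA : ∀ x, A (A x) = A x) (hB : ∀ x, B (B x) = B x)
    (hAB : ∀ x, A (B x) = 0) (hBA : ∀ x, B (A x) = 0) :
    LinearMap.range ((A + B : H →L[ℂ] H) : H →ₗ[ℂ] H) = LinearMap.range (A : H →ₗ[ℂ] H) ⊔ LinearMap.range (B : H →ₗ[ℂ] H) ∧
      LinearMap.range (A : H →ₗ[ℂ] H) ⊓ LinearMap.range (B : H →ₗ[ℂ] H) = ⊥ := by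
  constructor
  · apply le_antisymm
    · rintro y ⟨x, rfl⟩
      exact Submodule.add_mem_sup (LinearMap.mem_range_self _ x) (LinearMap.mem_range_self _ x)
    · apply sup_le
      · rintro y ⟨x, rfl⟩
        exact ⟨A x, by simp [hA, hBA]⟩
      · rintro y ⟨x, rfl⟩
        exact ⟨B x, by simp [hB, hAB]⟩
  · apply eq_bot_iff.mpr
    rintro y ⟨⟨u, hu⟩, ⟨v, hv⟩⟩
    have h1 : A y = y := by rw [← hu]; exact hA u
    have h2 : A y = 0 := by rw [← hv]; exact hAB v
    simpa [h2] using h1.symm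

end AuxRank

section Main

variable {H : Type*} [NormedAddCommGroup H] [InnerProductSpace ℂ H] [CompleteSpace H]

/-- Idempotency and orthogonality facts about partial sums of projections. -/
lemma aux_sum_facts (P : ℕ → H →L[ℂ] H)
    (hPproj : ∀ n, IsSelfAdjoint (P n) ∧ IsIdempotentElem (P n))
    (hPorth : ∀ m n, m ≠ n → (P m).comp (P n) = 0) (N : ℕ) :
    (∀ x, (∑ n ∈ range N, P n) ((∑ n ∈ range N, P n) x) = (∑ n ∈ range N, P n) x) ∧
    (∀ m, m < N → ∀ x, (∑ n ∈ range N, P n) x = 0 → P m x = 0) ∧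
    IsSelfAdjoint (∑ n ∈ range N, P n) := by
  have hdiag : ∀ m ∈ range N, ∀ x, P m ((∑ n ∈ range N, P n) x) = P m x := by
    intro m hm x
    rw [ContinuousLinearMap.sum_apply, map_sum]
    rw [Finset.sum_eq_single m]
    · have := congrArg (fun (T : H →L[ℂ] H) => T x) (hPproj m).2
      simpa [ContinuousLinearMap.mul_def] using this
    · intro n _ hn
      have := congrArg (fun (T : H →L[ℂ] H) => T x) (hPorth m n (Ne.symm hn))
      simpa using this
    · intro h; exact absurd hm h
  refine ⟨?_, ?_, ?_⟩
  · intro x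
    conv_lhs => rw [ContinuousLinearMap.sum_apply]
    rw [ContinuousLinearMap.sum_apply]
    exact Finset.sum_congr rfl fun m hm => by
      rw [← ContinuousLinearMap.sum_apply, hdiag m hm]
  · intro m hm x hx
    have := hdiag m (Finset.mem_range.mpr hm) x
    rw [hx, map_zero] at this
    exact this.symm
  · rw [IsSelfAdjoint, star_sum]
    exact Finset.sum_congr rfl fun n _ => (hPproj n).1

/-- Finite-dimensionality of the range of a partial sum. -/
lemma aux_findim (P : ℕ → H →L[ℂ] H)
    (hPfin : ∀ n, FiniteDimensional ℂ (LinearMap.range ((P n : H →L[ℂ] H) : H →ₗ[ℂ] H))) (N : ℕ) :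
    FiniteDimensional ℂ (LinearMap.range ((∑ n ∈ range N, P n : H →L[ℂ] H) : H →ₗ[ℂ] H)) := by
  have hle : LinearMap.range ((∑ n ∈ range N, P n : H →L[ℂ] H) : H →ₗ[ℂ] H) ≤
      (range N).sup (fun n => LinearMap.range ((P n : H →L[ℂ] H) : H →ₗ[ℂ] H)) := by
    rintro y ⟨x, rfl⟩
    simp only [ContinuousLinearMap.coe_coe, ContinuousLinearMap.sum_apply]
    exact Submodule.sum_mem _ fun n hn =>
      Finset.le_sup (f := fun n => LinearMap.range ((P n : H →L[ℂ] H) : H →ₗ[ℂ] H)) hn (LinearMap.mem_range_self (P n : H →ₗ[ℂ] H) x)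
  haveI : ∀ n : ℕ, FiniteDimensional ℂ ((fun n => LinearMap.range ((P n : H →L[ℂ] H) : H →ₗ[ℂ] H)) n) := hPfin
  exact Submodule.finiteDimensional_of_le hle

/-- Rank of a partial sum of pairwise orthogonal projections. -/
lemma aux_rank_sum (P : ℕ → H →L[ℂ] H)
    (hPproj : ∀ n, IsSelfAdjoint (P n) ∧ IsIdempotentElem (P n))
    (hPorth : ∀ m n, m ≠ n → (P m).comp (P n) = 0)
    (hPfin : ∀ n, FiniteDimensional ℂ (LinearMap.range ((P n : H →L[ℂ] H) : H →ₗ[ℂ] H))) (N : ℕ) :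
    Module.finrank ℂ (LinearMap.range ((∑ n ∈ range N, P n : H →L[ℂ] H) : H →ₗ[ℂ] H)) =
      ∑ n ∈ range N, Module.finrank ℂ (LinearMap.range ((P n : H →L[ℂ] H) : H →ₗ[ℂ] H)) := by
  induction N with
  | zero =>
    rw [Finset.range_zero, Finset.sum_empty, Finset.sum_empty]
    have hb : LinearMap.range (((0 : H →L[ℂ] H) : H →L[ℂ] H) : H →ₗ[ℂ] H) = ⊥ := by
      ext y; simp [LinearMap.mem_range, eq_comm]
    rw [hb]
    exact finrank_bot ℂ H
  | succ N ih =>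
    rw [Finset.sum_range_succ, Finset.sum_range_succ, ← ih]
    set A := ∑ n ∈ range N, P n with hAdef
    have hidem := (aux_sum_facts P hPproj hPorth N).1
    have hPN : ∀ x, P N (P N x) = P N x := fun x => by
      have := congrArg (fun (T : H →L[ℂ] H) => T x) (hPproj N).2
      simpa [ContinuousLinearMap.mul_def] using this
    have hAP : ∀ x, A (P N x) = 0 := by
      intro x
      rw [hAdef, ContinuousLinearMap.sum_apply]
      refine Finset.sum_eq_zero fun n hn => ?_
      have hne : n ≠ N := fun h => by simp [h] at hn
      have := congrArg (fun (T : H →L[ℂ] H) => T x) (hPorth n N hne)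
      simpa using this
    have hPA : ∀ x, P N (A x) = 0 := by
      intro x
      rw [hAdef, ContinuousLinearMap.sum_apply, map_sum]
      refine Finset.sum_eq_zero fun n hn => ?_
      have hne : N ≠ n := fun h => by simp [← h] at hn
      have := congrArg (fun (T : H →L[ℂ] H) => T x) (hPorth N n hne)
      simpa using this
    obtain ⟨hr, hi⟩ := aux_range_add A (P N) hidem hPN hAP hPA
    haveI : FiniteDimensional ℂ (LinearMap.range (A : H →ₗ[ℂ] H)) := aux_findim P hPfin N
    haveI : FiniteDimensional ℂ (LinearMap.range ((P N : H →L[ℂ] H) : H →ₗ[ℂ] H)) := hPfin N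
    have := Submodule.finrank_sup_add_finrank_inf_eq
      (LinearMap.range (A : H →ₗ[ℂ] H)) (LinearMap.range ((P N : H →L[ℂ] H) : H →ₗ[ℂ] H))
    rw [hi] at this
    simp only [finrank_bot, add_zero] at this
    rw [hr, this]
end Main


section MainLe

variable {H : Type*} [NormedAddCommGroup H] [InnerProductSpace ℂ H] [CompleteSpace H]

lemma main_le (P G : ℕ → H →L[ℂ] H)
    (hPproj : ∀ n, IsSelfAdjoint (P n) ∧ IsIdempotentElem (P n))
    (hGproj : ∀ n, IsSelfAdjoint (G n) ∧ IsIdempotentElem (G n))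
    (hPorth : ∀ m n, m ≠ n → (P m).comp (P n) = 0)
    (hGorth : ∀ m n, m ≠ n → (G m).comp (G n) = 0)
    (hPfin : ∀ n, FiniteDimensional ℂ (LinearMap.range ((P n : H →L[ℂ] H) : H →ₗ[ℂ] H)))
    (hPsum : ∀ x : H, HasSum (fun n => P n x) x)
    (N : ℕ)
    (hts : Summable (fun n => if N ≤ n then ‖P n - G n‖ ^ 2 else 0))
    (ht : ∑' n, (if N ≤ n then ‖P n - G n‖ ^ 2 else 0) < 1) :
    Module.finrank ℂ (LinearMap.range ((∑ n ∈ Finset.range N, G n : H →L[ℂ] H) : H →ₗ[ℂ] H)) ≤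
      Module.finrank ℂ (LinearMap.range ((∑ n ∈ Finset.range N, P n : H →L[ℂ] H) : H →ₗ[ℂ] H)) := by
  classical
  -- square-summable coefficients
  set a : ℕ → ℝ := fun n => if N ≤ n then ‖P n - G n‖ else 0 with ha_def
  have ha_nonneg : ∀ n, 0 ≤ a n := by
    intro n; by_cases h : N ≤ n <;> simp [ha_def, h]
  have ha_sq : ∀ n, a n ^ 2 = (if N ≤ n then ‖P n - G n‖ ^ 2 else 0) := by
    intro n; by_cases h : N ≤ n <;> simp [ha_def, h]
  have ha2 : Summable (fun n => a n ^ 2) := by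
    refine hts.congr fun n => (ha_sq n).symm
  have ht1 : ∑' n, a n ^ 2 < 1 := by
    rw [tsum_congr ha_sq]; exact ht
  have ht0 : (0:ℝ) ≤ ∑' n, a n ^ 2 := tsum_nonneg fun n => sq_nonneg _
  set c : ℝ := Real.sqrt (∑' n, a n ^ 2) with hc_def
  have hc1 : c < 1 := by
    rw [hc_def, ← Real.sqrt_one]; exact Real.sqrt_lt_sqrt ht0 ht1
  have hc0 : (0:ℝ) ≤ c := Real.sqrt_nonneg _
  -- the perturbation operators
  set W : ℕ → H →L[ℂ] H := fun n => if N ≤ n then (G n - P n).comp (P n) else 0 with hW_def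
  have hPidem : ∀ n (x : H), P n (P n x) = P n x := by
    intro n x
    have := congrArg (fun (T : H →L[ℂ] H) => T x) (hPproj n).2
    simpa [ContinuousLinearMap.mul_def] using this
  have hWbound : ∀ n (x : H), ‖W n x‖ ≤ a n * ‖P n x‖ := by
    intro n x
    by_cases h : N ≤ n
    · simp only [hW_def, ha_def, if_pos h, ContinuousLinearMap.comp_apply]
      calc ‖(G n - P n) (P n x)‖ ≤ ‖G n - P n‖ * ‖P n x‖ := le_opNorm _ _
        _ = ‖P n - G n‖ * ‖P n x‖ := by rw [norm_sub_rev]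
    · simp [hW_def, ha_def, if_neg h]
  have hpyth : ∀ x : H, HasSum (fun n => ‖P n x‖ ^ 2) (‖x‖ ^ 2) :=
    fun x => aux_pyth_hasSum P hPproj hPorth x (hPsum x)
  have hsummand : ∀ x : H, Summable (fun n => a n * ‖P n x‖) := by
    intro x
    refine Summable.of_nonneg_of_le (fun n => mul_nonneg (ha_nonneg n) (norm_nonneg _))
      (fun n => ?_) ((ha2.add (hpyth x).summable).div_const 2)
    have h2 := two_mul_le_add_sq (a n) ‖P n x‖
    have : 2 * (a n * ‖P n x‖) ≤ a n ^ 2 + ‖P n x‖ ^ 2 := by linarith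
    linarith
  have hWsummable : ∀ x : H, Summable (fun n => W n x) := fun x =>
    Summable.of_norm_bounded (hsummand x) (fun n => hWbound n x)
  have hWnormsummable : ∀ x : H, Summable (fun n => ‖W n x‖) := fun x =>
    Summable.of_nonneg_of_le (fun n => norm_nonneg _) (fun n => hWbound n x) (hsummand x)
  have hDbound : ∀ x : H, ‖∑' n, W n x‖ ≤ c * ‖x‖ := by
    intro x
    have h1 : ‖∑' n, W n x‖ ≤ ∑' n, ‖W n x‖ := norm_tsum_le_tsum_norm (hWnormsummable x)
    have h2 : ∑' n, ‖W n x‖ ≤ ∑' n, a n * ‖P n x‖ :=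
      Summable.tsum_le_tsum (fun n => hWbound n x) (hWnormsummable x) (hsummand x)
    have h3 := aux_tsum_cs a (fun n => ‖P n x‖) ha_nonneg (fun n => norm_nonneg _)
      ha2 (hpyth x).summable (hsummand x)
    rw [(hpyth x).tsum_eq, Real.sqrt_sq (norm_nonneg x)] at h3
    calc ‖∑' n, W n x‖ ≤ ∑' n, ‖W n x‖ := h1
      _ ≤ ∑' n, a n * ‖P n x‖ := h2
      _ ≤ c * ‖x‖ := h3
  -- the operator D
  set Dlin : H →ₗ[ℂ] H :=
    { toFun := fun x => ∑' n, W n x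
      map_add' := fun x y => by
        rw [← Summable.tsum_add (hWsummable x) (hWsummable y)]
        exact tsum_congr fun n => map_add (W n) x y
      map_smul' := fun r x => by
        simp only [RingHom.id_apply]
        calc ∑' n, W n (r • x) = ∑' n, r • (W n x) :=
              tsum_congr fun n => map_smul (W n) r x
          _ = r • ∑' n, W n x := ((hWsummable x).hasSum.const_smul r).tsum_eq } with hDlin_def
  set D : H →L[ℂ] H := Dlin.mkContinuous c hDbound with hD_def
  have hDnorm : ‖D‖ ≤ c := Dlin.mkContinuous_norm_le hc0 hDbound
  have hDapply : ∀ x, D x = ∑' n, W n x := fun x => rfl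
  -- the invertible operator T
  have hunit : ‖(-D)‖ < 1 := by rw [norm_neg]; exact lt_of_le_of_lt hDnorm hc1
  set u : (H →L[ℂ] H)ˣ := Units.oneSub (-D) hunit with hu_def
  set T : H →L[ℂ] H := (u : H →L[ℂ] H) with hT_def
  have hTval : T = 1 + D := by
    rw [hT_def, hu_def]
    show (1 : H →L[ℂ] H) - -D = 1 + D
    rw [sub_neg_eq_add]
  have hTapp : ∀ x, T x = x + D x := fun x => by
    rw [hTval]; simp
  have hTsum : ∀ x, HasSum (fun n => P n x + W n x) (T x) := fun x => by
    rw [hTapp, hDapply]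
    exact (hPsum x).add (hWsummable x).hasSum
  -- key mapping property
  have hK1 : ∀ x, (∀ n, n < N → P n x = 0) → ∀ m, m < N → G m (T x) = 0 := by
    intro x hx m hm
    have h1 : HasSum (fun n => G m (P n x + W n x)) (G m (T x)) :=
      (G m).hasSum (hTsum x)
    have h2 : ∀ n, G m (P n x + W n x) = (0:H) := by
      intro n
      by_cases h : N ≤ n
      · have hterm : P n x + W n x = G n (P n x) := by
          simp only [hW_def, if_pos h, ContinuousLinearMap.comp_apply,
            ContinuousLinearMap.sub_apply, hPidem n x]
          abel
        rw [hterm, ← ContinuousLinearMap.comp_apply, hGorth m n (by omega)]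
        simp
      · have hn : n < N := by omega
        simp [hW_def, if_neg h, hx n hn]
    rw [funext h2] at h1
    exact h1.unique hasSum_zero
  -- facts about the partial sums
  obtain ⟨hAidem, hAker, hAsa⟩ := aux_sum_facts P hPproj hPorth N
  obtain ⟨hBidem, hBker, hBsa⟩ := aux_sum_facts G hGproj hGorth N
  -- adjoint of T is injective
  have hTadj_inj : Function.Injective (ContinuousLinearMap.adjoint T) := by
    have h1 : IsUnit (star T) := u.isUnit.star
    rw [ContinuousLinearMap.star_eq_adjoint] at h1
    obtain ⟨v, hv⟩ := h1
    have h3 : ∀ z, (↑v⁻¹ : H →L[ℂ] H) ((ContinuousLinearMap.adjoint T) z) = z := by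
      intro z
      rw [← hv, ← ContinuousLinearMap.mul_apply, Units.inv_mul,
        ContinuousLinearMap.one_apply]
    intro x y hxy
    rw [← h3 x, ← h3 y, hxy]
  -- adjoint of T maps range B into range A
  have hmem : ∀ w, w ∈ LinearMap.range ((∑ n ∈ Finset.range N, G n : H →L[ℂ] H) : H →ₗ[ℂ] H) →
      (ContinuousLinearMap.adjoint T) w ∈ LinearMap.range ((∑ n ∈ Finset.range N, P n : H →L[ℂ] H) : H →ₗ[ℂ] H) := by
    intro w hw
    set s : H := (ContinuousLinearMap.adjoint T) w with hs_def
    have horth : ∀ y, (∑ n ∈ Finset.range N, P n) y = 0 → ⟪s, y⟫_ℂ = 0 := by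
      intro y hy
      rw [hs_def, ContinuousLinearMap.adjoint_inner_left]
      have hTy : ∀ m, m < N → G m (T y) = 0 :=
        hK1 y (fun n hn => hAker n hn y hy)
      have hBTy : (∑ n ∈ Finset.range N, G n) (T y) = 0 := by
        rw [ContinuousLinearMap.sum_apply]
        exact Finset.sum_eq_zero fun m hm => hTy m (Finset.mem_range.mp hm)
      obtain ⟨v0, hv0⟩ := hw
      rw [← hv0]
      calc ⟪(∑ n ∈ Finset.range N, G n) v0, T y⟫_ℂ
          = ⟪v0, (∑ n ∈ Finset.range N, G n) (T y)⟫_ℂ := by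
            exact hBsa.isSymmetric v0 (T y)
        _ = 0 := by rw [hBTy, inner_zero_right]
    have hz : (∑ n ∈ Finset.range N, P n) (s - (∑ n ∈ Finset.range N, P n) s) = 0 := by
      rw [map_sub, hAidem s, sub_self]
    have h1 : ⟪s, s - (∑ n ∈ Finset.range N, P n) s⟫_ℂ = 0 := horth _ hz
    have h2 : ⟪(∑ n ∈ Finset.range N, P n) s, s - (∑ n ∈ Finset.range N, P n) s⟫_ℂ = 0 := by
      calc ⟪(∑ n ∈ Finset.range N, P n) s, s - (∑ n ∈ Finset.range N, P n) s⟫_ℂ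
          = ⟪s, (∑ n ∈ Finset.range N, P n) (s - (∑ n ∈ Finset.range N, P n) s)⟫_ℂ := by
            exact hAsa.isSymmetric s (s - (∑ n ∈ Finset.range N, P n) s)
        _ = 0 := by rw [hz, inner_zero_right]
    have h3 : ⟪s - (∑ n ∈ Finset.range N, P n) s,
        s - (∑ n ∈ Finset.range N, P n) s⟫_ℂ = 0 := by
      rw [inner_sub_left, h1, h2, sub_zero]
    have h4 : s - (∑ n ∈ Finset.range N, P n) s = 0 := inner_self_eq_zero.mp h3
    exact ⟨s, (sub_eq_zero.mp h4).symm⟩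
  -- conclude via an injective linear map
  haveI : FiniteDimensional ℂ (LinearMap.range ((∑ n ∈ Finset.range N, P n : H →L[ℂ] H) : H →ₗ[ℂ] H)) :=
    aux_findim P hPfin N
  let φ : LinearMap.range ((∑ n ∈ Finset.range N, G n : H →L[ℂ] H) : H →ₗ[ℂ] H) →ₗ[ℂ]
      LinearMap.range ((∑ n ∈ Finset.range N, P n : H →L[ℂ] H) : H →ₗ[ℂ] H) :=
    LinearMap.codRestrict _
      (((ContinuousLinearMap.adjoint T : H →L[ℂ] H) : H →ₗ[ℂ] H).domRestrict _)
      (fun w => hmem w w.2)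
  have hφ : Function.Injective φ := by
    intro x y hxy
    apply Subtype.ext
    apply hTadj_inj
    have h5 := congrArg Subtype.val hxy
    simpa [φ, LinearMap.codRestrict, LinearMap.domRestrict] using h5
  exact LinearMap.finrank_le_finrank_of_injective hφ

end MainLe

/-- Let `(P n)` and `(G n)` be sequences of pairwise orthogonal finite-rank orthogonal
projections in a complex Hilbert space `H`, each summing strongly to the identity, with
`∑ ‖P n − G n‖² < ∞`. Then there is `N₀` such that for all `N ≥ N₀`,
`∑_{n<N} rank (P n) = ∑_{n<N} rank (G n)`. -/
theorem rank_sums_eventually_equal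
    {H : Type*} [NormedAddCommGroup H] [InnerProductSpace ℂ H] [CompleteSpace H]
    (P G : ℕ → H →L[ℂ] H)
    (hPproj : ∀ n, IsSelfAdjoint (P n) ∧ IsIdempotentElem (P n))
    (hGproj : ∀ n, IsSelfAdjoint (G n) ∧ IsIdempotentElem (G n))
    (hPorth : ∀ m n, m ≠ n → (P m).comp (P n) = 0)
    (hGorth : ∀ m n, m ≠ n → (G m).comp (G n) = 0)
    (hPfin : ∀ n, FiniteDimensional ℂ (LinearMap.range (P n : H →ₗ[ℂ] H)))
    (hGfin : ∀ n, FiniteDimensional ℂ (LinearMap.range (G n : H →ₗ[ℂ] H)))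
    (hPsum : ∀ x : H, HasSum (fun n => P n x) x)
    (hGsum : ∀ x : H, HasSum (fun n => G n x) x)
    (hsq : Summable (fun n => ‖P n - G n‖ ^ 2)) :
    ∃ N₀ : ℕ, ∀ N ≥ N₀,
      ∑ n ∈ Finset.range N, Module.finrank ℂ (LinearMap.range (P n : H →ₗ[ℂ] H)) =
        ∑ n ∈ Finset.range N, Module.finrank ℂ (LinearMap.range (G n : H →ₗ[ℂ] H)) := by
  classical
  set f : ℕ → ℝ := fun n => ‖P n - G n‖ ^ 2 with hf_def
  have hf0 : ∀ n, 0 ≤ f n := fun n => sq_nonneg _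
  have hS : HasSum f (∑' n, f n) := hsq.hasSum
  -- summability of the truncated tails
  have hts : ∀ N : ℕ, Summable (fun n => if N ≤ n then f n else 0) := by
    intro N
    refine Summable.of_nonneg_of_le (fun n => ?_) (fun n => ?_) hsq
    · by_cases h : N ≤ n <;> simp [h, hf0 n]
    · by_cases h : N ≤ n <;> simp [h, hf0 n]
  -- value of the truncated tails
  have htail : ∀ N : ℕ, HasSum (fun n => if N ≤ n then f n else 0)
      ((∑' n, f n) - ∑ n ∈ Finset.range N, f n) := by
    intro N
    have h1 : HasSum (fun n => if n ∈ Finset.range N then f n else 0)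
        (∑ n ∈ Finset.range N, if n ∈ Finset.range N then f n else 0) :=
      hasSum_sum_of_ne_finset_zero (fun b hb => if_neg hb)
    have h2 : (∑ n ∈ Finset.range N, if n ∈ Finset.range N then f n else 0)
        = ∑ n ∈ Finset.range N, f n :=
      Finset.sum_congr rfl fun n hn => if_pos hn
    rw [h2] at h1
    have h3 := hS.sub h1
    have h4 : (fun n => f n - if n ∈ Finset.range N then f n else 0)
        = fun n => if N ≤ n then f n else 0 := by
      funext n
      by_cases h : N ≤ n
      · simp [h, Finset.mem_range, not_lt.mpr h]
      · simp [h, Finset.mem_range, not_le.mp h]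
    rw [h4] at h3
    exact h3
  -- eventually the tail is < 1
  have hten : Tendsto (fun N : ℕ => (∑' n, f n) - ∑ n ∈ Finset.range N, f n)
      atTop (nhds 0) := by
    have h1 := hS.tendsto_sum_nat
    have h2 := tendsto_const_nhds (x := (∑' n, f n)) (f := atTop (α := ℕ))
    have h3 := h2.sub h1
    simpa using h3
  have hev : ∀ᶠ N : ℕ in atTop, (∑' n, f n) - ∑ n ∈ Finset.range N, f n < 1 :=
    hten.eventually_lt_const one_pos
  obtain ⟨N₀, hN₀⟩ := eventually_atTop.mp hev
  refine ⟨N₀, fun N hN => ?_⟩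
  have htN : ∑' n, (if N ≤ n then ‖P n - G n‖ ^ 2 else 0) < 1 := by
    rw [(htail N).tsum_eq]
    exact hN₀ N hN
  have htsN : Summable (fun n => if N ≤ n then ‖P n - G n‖ ^ 2 else 0) := hts N
  have hsq' : Summable (fun n => ‖G n - P n‖ ^ 2) := by
    refine hsq.congr fun n => ?_
    rw [norm_sub_rev]
  have htsN' : Summable (fun n => if N ≤ n then ‖G n - P n‖ ^ 2 else 0) := by
    refine htsN.congr fun n => ?_
    by_cases h : N ≤ n <;> simp [h, norm_sub_rev (P n) (G n)]
  have htN' : ∑' n, (if N ≤ n then ‖G n - P n‖ ^ 2 else 0) < 1 := by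
    have he : (fun n => if N ≤ n then ‖G n - P n‖ ^ 2 else 0)
        = fun n => if N ≤ n then ‖P n - G n‖ ^ 2 else 0 := by
      funext n
      by_cases h : N ≤ n <;> simp [h, norm_sub_rev (P n) (G n)]
    rw [he]
    exact htN
  have h1 := main_le P G hPproj hGproj hPorth hGorth hPfin hPsum N htsN htN
  have h2 := main_le G P hGproj hPproj hGorth hPorth hGfin hGsum N htsN' htN'
  rw [← aux_rank_sum P hPproj hPorth hPfin N, ← aux_rank_sum G hGproj hGorth hGfin N]
  exact le_antisymm h2 h1
end

section
/- Let H be a Hilbert space, (A_j)_{j≥1} a sequence of bounded operators on H and (G_j)_{j≥1} a sequence of pairwise orthogonal projections such that: (i) ∑ A_j converges in the strong operator topology to an operator A; (ii) the orthogonal projection G := I − ∑ G_j has finite rank; (iii) ∑_{j≥1} ‖A_j − G_j‖² < 1 and rank A_j ≤ rank G_j < ∞ for all j. Then codim(Ran A) ≥ rank G. -/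
/-- A self-adjoint idempotent contracts norms. -/
lemma aux_proj_norm_le {H : Type*} [NormedAddCommGroup H] [InnerProductSpace ℂ H]
    [CompleteSpace H] (P : H →L[ℂ] H) (hsa : IsSelfAdjoint P) (hid : IsIdempotentElem P)
    (x : H) : ‖P x‖ ≤ ‖x‖ := by
  have hadj : ContinuousLinearMap.adjoint P = P := ContinuousLinearMap.isSelfAdjoint_iff'.mp hsa
  have hPP : P (P x) = P x := by
    conv_rhs => rw [← hid.eq]
    simp [ContinuousLinearMap.mul_apply]
  have h1 : (inner ℂ (P x) (P x) : ℂ) = inner ℂ x (P x) := by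
    rw [← ContinuousLinearMap.adjoint_inner_right P x (P x), hadj, hPP]
  have h2 : ‖P x‖ ^ 2 = RCLike.re (inner ℂ x (P x) : ℂ) := by
    rw [← h1, inner_self_eq_norm_sq]
  have h3 : RCLike.re (inner ℂ x (P x) : ℂ) ≤ ‖x‖ * ‖P x‖ :=
    le_trans (RCLike.re_le_norm _) (norm_inner_le_norm x (P x))
  nlinarith [norm_nonneg (P x), norm_nonneg x]

/-- Bessel-type inequality for a finite family of pairwise orthogonal projections. -/
lemma aux_bessel {H : Type*} [NormedAddCommGroup H] [InnerProductSpace ℂ H]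
    [CompleteSpace H] (G : ℕ → H →L[ℂ] H)
    (hGproj : ∀ j, IsSelfAdjoint (G j) ∧ IsIdempotentElem (G j))
    (hGorth : ∀ j k, j ≠ k → (G j).comp (G k) = 0)
    (x : H) (F : Finset ℕ) : ∑ j ∈ F, ‖G j x‖ ^ 2 ≤ ‖x‖ ^ 2 := by
  classical
  set s : H := ∑ j ∈ F, G j x with hs
  have hadj : ∀ j, ContinuousLinearMap.adjoint (G j) = G j :=
    fun j => ContinuousLinearMap.isSelfAdjoint_iff'.mp (hGproj j).1
  have hGs : ∀ j ∈ F, G j s = G j x := by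
    intro j hj
    rw [hs, map_sum]
    rw [Finset.sum_eq_single j]
    · conv_rhs => rw [← (hGproj j).2.eq]
      simp [ContinuousLinearMap.mul_apply]
    · intro k hk hkj
      have h0 := hGorth j k (Ne.symm hkj)
      have := congrArg (fun (T : H →L[ℂ] H) => T x) h0
      simpa [ContinuousLinearMap.comp_apply] using this
    · intro h; exact absurd hj h
  have hidem : ∀ j, G j (G j x) = G j x := by
    intro j
    conv_rhs => rw [← (hGproj j).2.eq]
    simp [ContinuousLinearMap.mul_apply]
  have hterm : ∀ j ∈ F, (inner ℂ (G j x) s : ℂ) = inner ℂ x (G j x) := by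
    intro j hj
    rw [← ContinuousLinearMap.adjoint_inner_right (G j) x s, hadj, hGs j hj]
  have hre : ∀ j, ‖G j x‖ ^ 2 = RCLike.re (inner ℂ x (G j x) : ℂ) := by
    intro j
    rw [← inner_self_eq_norm_sq (𝕜 := ℂ)]
    congr 1
    rw [← ContinuousLinearMap.adjoint_inner_right (G j) x (G j x), hadj, hidem]
  have hss : (inner ℂ s s : ℂ) = inner ℂ x s := by
    conv_lhs => rw [hs, sum_inner]
    conv_rhs => rw [hs, inner_sum]
    exact Finset.sum_congr rfl fun j hj => by rw [← hs, hterm j hj]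
  have hxs : ∑ j ∈ F, ‖G j x‖ ^ 2 = RCLike.re (inner ℂ x s : ℂ) := by
    conv_rhs => rw [hs, inner_sum, map_sum]
    exact Finset.sum_congr rfl fun j _ => hre j
  have hns : ‖s‖ ^ 2 = RCLike.re (inner ℂ x s : ℂ) := by
    rw [← inner_self_eq_norm_sq (𝕜 := ℂ), hss]
  have hb : RCLike.re (inner ℂ x s : ℂ) ≤ ‖x‖ * ‖s‖ :=
    le_trans (RCLike.re_le_norm _) (norm_inner_le_norm x s)
  nlinarith [norm_nonneg s, norm_nonneg x]

/-- Let `(A j)` be a sequence of bounded operators on a complex Hilbert space `H` whose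
sum converges strongly to `A`, and `(G j)` a sequence of pairwise orthogonal finite-rank
orthogonal projections such that the orthogonal projection `G = I − ∑ G j` has finite
rank, `∑ ‖A j − G j‖² < 1` and `rank (A j) ≤ rank (G j) < ∞` for all `j`. Then
`codim (Ran A) ≥ rank G`. -/
theorem codim_range_ge_rank
    {H : Type*} [NormedAddCommGroup H] [InnerProductSpace ℂ H] [CompleteSpace H]
    (A G : ℕ → H →L[ℂ] H) (Aop Gop : H →L[ℂ] H)
    (hAsum : ∀ x : H, HasSum (fun j => A j x) (Aop x))
    (hGproj : ∀ j, IsSelfAdjoint (G j) ∧ IsIdempotentElem (G j))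
    (hGorth : ∀ j k, j ≠ k → (G j).comp (G k) = 0)
    (hGfin : ∀ j, FiniteDimensional ℂ (LinearMap.range (G j : H →ₗ[ℂ] H)))
    (hGsum : ∀ x : H, HasSum (fun j => G j x) (x - Gop x))
    (hGopproj : IsSelfAdjoint Gop ∧ IsIdempotentElem Gop)
    (hGopfin : FiniteDimensional ℂ (LinearMap.range (Gop : H →ₗ[ℂ] H)))
    (hsq : Summable (fun j => ‖A j - G j‖ ^ 2))
    (hsq1 : ∑' j, ‖A j - G j‖ ^ 2 < 1)
    (hAfin : ∀ j, FiniteDimensional ℂ (LinearMap.range (A j : H →ₗ[ℂ] H)))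
    (hrank : ∀ j, Module.finrank ℂ (LinearMap.range (A j : H →ₗ[ℂ] H)) ≤
      Module.finrank ℂ (LinearMap.range (G j : H →ₗ[ℂ] H))) :
    (Module.finrank ℂ (LinearMap.range (Gop : H →ₗ[ℂ] H)) : Cardinal) ≤
      Module.rank ℂ (((LinearMap.range (Aop : H →ₗ[ℂ] H)).topologicalClosure)ᗮ : Submodule ℂ H) := by
  classical
  have hGadj : ∀ j, ContinuousLinearMap.adjoint (G j) = G j :=
    fun j => ContinuousLinearMap.isSelfAdjoint_iff'.mp (hGproj j).1
  have hGopadj : ContinuousLinearMap.adjoint Gop = Gop :=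
    ContinuousLinearMap.isSelfAdjoint_iff'.mp hGopproj.1
  -- basic facts about ranges of the `G j`
  have hGid : ∀ k (u : H), u ∈ LinearMap.range (G k : H →ₗ[ℂ] H) → G k u = u := by
    rintro k u ⟨w, rfl⟩
    conv_rhs => rw [← (hGproj k).2.eq]
    simp [ContinuousLinearMap.mul_apply]
  have hGne : ∀ j k (u : H), j ≠ k → u ∈ LinearMap.range (G k : H →ₗ[ℂ] H) → G j u = 0 := by
    rintro j k u hjk ⟨w, rfl⟩
    have := congrArg (fun (T : H →L[ℂ] H) => T w) (hGorth j k hjk)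
    simpa [ContinuousLinearMap.comp_apply] using this
  -- the numbers ε j
  set ε : ℕ → ℝ := fun j => ‖A j - G j‖ with hε
  have hε0 : ∀ j, 0 ≤ ε j := fun j => norm_nonneg _
  have htsum0 : 0 ≤ ∑' j, ε j ^ 2 := tsum_nonneg fun j => sq_nonneg _
  have hεlt : ∀ j, ε j < 1 := by
    intro j
    have h1 : ε j ^ 2 ≤ ∑' i, ε i ^ 2 := Summable.le_tsum hsq j fun i _ => sq_nonneg _
    nlinarith [hε0 j]
  set c : ℝ := Real.sqrt (∑' j, ε j ^ 2) with hcdef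
  have hc0 : 0 ≤ c := Real.sqrt_nonneg _
  have hcsq : c ^ 2 = ∑' j, ε j ^ 2 := Real.sq_sqrt htsum0
  have hc1 : c < 1 := by nlinarith
  -- Cauchy-Schwarz bound
  have hCS : ∀ (x : H) (F : Finset ℕ), ∑ j ∈ F, ε j * ‖G j x‖ ≤ c * ‖x‖ := by
    intro x F
    have h1 : (∑ j ∈ F, ε j * ‖G j x‖) ^ 2 ≤
        (∑ j ∈ F, ε j ^ 2) * ∑ j ∈ F, ‖G j x‖ ^ 2 :=
      Finset.sum_mul_sq_le_sq_mul_sq F _ _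
    have h2 : ∑ j ∈ F, ε j ^ 2 ≤ ∑' j, ε j ^ 2 :=
      Summable.sum_le_tsum F (fun i _ => sq_nonneg _) hsq
    have h3 : ∑ j ∈ F, ‖G j x‖ ^ 2 ≤ ‖x‖ ^ 2 :=
      aux_bessel G hGproj hGorth x F
    have h4 : 0 ≤ ∑ j ∈ F, ε j * ‖G j x‖ :=
      Finset.sum_nonneg fun j _ => mul_nonneg (hε0 j) (norm_nonneg _)
    have h5 : 0 ≤ ∑ j ∈ F, ‖G j x‖ ^ 2 := Finset.sum_nonneg fun j _ => sq_nonneg _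
    nlinarith [norm_nonneg x, mul_nonneg hc0 (norm_nonneg x), sq_nonneg (∑ j ∈ F, ε j * ‖G j x‖)]
  -- summability of the perturbation series
  have habs : ∀ x : H, Summable (fun j => ‖(A j - G j) (G j x)‖) := by
    intro x
    apply summable_of_sum_le (fun j => norm_nonneg _)
    intro F
    calc ∑ j ∈ F, ‖(A j - G j) (G j x)‖ ≤ ∑ j ∈ F, ε j * ‖G j x‖ :=
          Finset.sum_le_sum fun j _ => (A j - G j).le_opNorm (G j x)
      _ ≤ c * ‖x‖ := hCS x F
  have hDsummable : ∀ x : H, Summable (fun j => (A j - G j) (G j x)) :=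
    fun x => (habs x).of_norm
  have hDnorm : ∀ x : H, ‖∑' j, (A j - G j) (G j x)‖ ≤ c * ‖x‖ := by
    intro x
    refine le_trans (norm_tsum_le_tsum_norm (habs x)) ?_
    refine Summable.tsum_le_of_sum_le (habs x) ?_
    intro F
    calc ∑ j ∈ F, ‖(A j - G j) (G j x)‖ ≤ ∑ j ∈ F, ε j * ‖G j x‖ :=
          Finset.sum_le_sum fun j _ => (A j - G j).le_opNorm (G j x)
      _ ≤ c * ‖x‖ := hCS x F
  -- the perturbation operator D
  let Dl : H →ₗ[ℂ] H :=
    { toFun := fun x => ∑' j, (A j - G j) (G j x)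
      map_add' := by
        intro x y
        rw [← Summable.tsum_add (hDsummable x) (hDsummable y)]
        exact tsum_congr fun j => by simp [map_add]
      map_smul' := by
        intro m x
        rw [RingHom.id_apply, ← Summable.tsum_const_smul m (hDsummable x)]
        exact tsum_congr fun j => by simp [map_smul] }
  let D : H →L[ℂ] H := Dl.mkContinuous c hDnorm
  have hDapp : ∀ x : H, D x = ∑' j, (A j - G j) (G j x) := fun x => rfl
  have hDle : ‖D‖ ≤ c := Dl.mkContinuous_norm_le hc0 hDnorm
  have hDlt : ‖-D‖ < 1 := by rw [norm_neg]; exact lt_of_le_of_lt hDle hc1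
  set U : (H →L[ℂ] H)ˣ := Units.oneSub (-D) hDlt with hUdef
  have hUval : (U : H →L[ℂ] H) = 1 + D := by
    rw [hUdef, Units.val_oneSub, sub_neg_eq_add]
  -- key pointwise facts on ranges of `G k`
  have hkey : ∀ k (u : H), u ∈ LinearMap.range (G k : H →ₗ[ℂ] H) →
      (U : H →L[ℂ] H) u = A k u ∧ Gop u = 0 := by
    intro k u hu
    have hGku : G k u = u := hGid k u hu
    have hGju : ∀ j, j ≠ k → G j u = 0 := fun j hj => hGne j k u hj hu
    have hsum0 : HasSum (fun j => G j u) u := by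
      have h := hasSum_single (f := fun j => G j u) k fun b hb => hGju b hb
      simpa [hGku] using h
    have hGopu : Gop u = 0 := by
      have h2 := (hsum0.unique (hGsum u))
      exact sub_eq_self.mp h2.symm
    have hDu : D u = (A k - G k) u := by
      rw [hDapp]
      rw [tsum_eq_single k]
      · rw [hGku]
      · intro j hj
        rw [hGju j hj, map_zero]
    refine ⟨?_, hGopu⟩
    rw [hUval]
    simp only [ContinuousLinearMap.add_apply, ContinuousLinearMap.one_apply, hDu,
      ContinuousLinearMap.sub_apply, hGku]
    abel
  -- rank argument : range (A k) = A k '' (range (G k))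
  have hrange : ∀ k (x : H), ∃ u, u ∈ LinearMap.range (G k : H →ₗ[ℂ] H) ∧ A k x = A k u := by
    intro k x
    haveI := hGfin k
    haveI := hAfin k
    set V : Submodule ℂ H := LinearMap.range (G k : H →ₗ[ℂ] H) with hV
    let φ : V →ₗ[ℂ] H :=
      (G k).toLinearMap.comp ((A k).toLinearMap.comp V.subtype)
    have hφinj : Function.Injective φ := by
      rw [← LinearMap.ker_eq_bot]
      apply LinearMap.ker_eq_bot'.mpr
      intro v hv
      have hv0 : G k (A k (v : H)) = 0 := hv
      have hGv : G k (v : H) = v := hGid k v v.2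
      have heq : -(v : H) = G k ((A k - G k) (v : H)) := by
        rw [ContinuousLinearMap.sub_apply, map_sub, hv0, hGv, hGv, zero_sub]
      have hn1 : ‖(v : H)‖ ≤ ‖(A k - G k) (v : H)‖ := by
        rw [show ‖(v : H)‖ = ‖-(v : H)‖ from (norm_neg _).symm, heq]
        exact aux_proj_norm_le (G k) (hGproj k).1 (hGproj k).2 _
      have hn2 : ‖(A k - G k) (v : H)‖ ≤ ε k * ‖(v : H)‖ := (A k - G k).le_opNorm _
      have hv' : (v : H) = 0 := by
        by_contra hne
        have : 0 < ‖(v : H)‖ := norm_pos_iff.mpr hne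
        nlinarith [hεlt k]
      exact Subtype.ext hv'
    have h1 : Module.finrank ℂ V = Module.finrank ℂ (LinearMap.range φ) :=
      (LinearMap.finrank_range_of_inj hφinj).symm
    have h2 : LinearMap.range φ =
        Submodule.map (G k).toLinearMap (Submodule.map (A k).toLinearMap V) := by
      rw [LinearMap.range_comp, LinearMap.range_comp, Submodule.range_subtype]
    haveI : Module.Finite ℂ (Submodule.map (A k).toLinearMap V) := Module.Finite.map V _
    have h3 : Module.finrank ℂ (LinearMap.range φ) ≤
        Module.finrank ℂ (Submodule.map (A k).toLinearMap V) := by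
      rw [h2]; exact Submodule.finrank_map_le _ _
    have h4 : Submodule.map (A k).toLinearMap V ≤ LinearMap.range (A k : H →ₗ[ℂ] H) := by
      rintro y ⟨u, hu, rfl⟩; exact ⟨u, rfl⟩
    have h5 : Module.finrank ℂ (LinearMap.range (A k : H →ₗ[ℂ] H)) ≤
        Module.finrank ℂ (Submodule.map (A k).toLinearMap V) := by
      calc Module.finrank ℂ (LinearMap.range (A k : H →ₗ[ℂ] H))
          ≤ Module.finrank ℂ (LinearMap.range (G k : H →ₗ[ℂ] H)) := hrank k
        _ = Module.finrank ℂ V := by rw [hV]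
        _ = Module.finrank ℂ (LinearMap.range φ) := h1
        _ ≤ _ := h3
    have heq : Submodule.map (A k).toLinearMap V = LinearMap.range (A k : H →ₗ[ℂ] H) :=
      Submodule.eq_of_le_of_finrank_le h4 h5
    have hx : A k x ∈ Submodule.map (A k).toLinearMap V := by
      rw [heq]; exact ⟨x, rfl⟩
    obtain ⟨u, hu, hux⟩ := hx
    exact ⟨u, hu, hux.symm⟩
  -- the inverse of U, and the witnessing subspace W
  set Vi : H →L[ℂ] H := ((U⁻¹ : (H →L[ℂ] H)ˣ) : H →L[ℂ] H) with hVi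
  have hViU : ∀ z : H, Vi ((U : H →L[ℂ] H) z) = z := by
    intro z
    have h1 : (Vi * (U : H →L[ℂ] H)) z = (1 : H →L[ℂ] H) z := by
      rw [hVi, Units.inv_mul]
    simpa [ContinuousLinearMap.mul_apply] using h1
  set Wi : H →L[ℂ] H := ContinuousLinearMap.adjoint Vi with hWi
  set W : Submodule ℂ H := Submodule.map (Wi : H →ₗ[ℂ] H) (LinearMap.range (Gop : H →ₗ[ℂ] H)) with hW
  have horth : ∀ y ∈ W, ∀ x : H, (inner ℂ y (Aop x) : ℂ) = 0 := by
    rintro y ⟨g, ⟨g', rfl⟩, rfl⟩ x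
    have hterm : ∀ j, (inner ℂ (Wi (Gop g')) (A j x) : ℂ) = 0 := by
      intro j
      obtain ⟨u, hu, hAx⟩ := hrange j x
      obtain ⟨hUu, hGopu⟩ := hkey j u hu
      rw [hAx, ← hUu, hWi, ContinuousLinearMap.adjoint_inner_left, hViU u,
        ← hGopadj, ContinuousLinearMap.adjoint_inner_left, hGopu, inner_zero_right]
    have hsum : HasSum (fun j => (innerSL ℂ (Wi (Gop g'))) (A j x))
        ((innerSL ℂ (Wi (Gop g'))) (Aop x)) := (hAsum x).mapL (innerSL ℂ (Wi (Gop g')))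
    have hsum' : HasSum (fun _ : ℕ => (0 : ℂ)) (inner ℂ (Wi (Gop g')) (Aop x) : ℂ) := by
      have : (fun j => (innerSL ℂ (Wi (Gop g'))) (A j x)) = fun _ : ℕ => (0 : ℂ) := by
        funext j
        simpa using hterm j
      rw [this] at hsum
      simpa using hsum
    exact (hsum'.unique hasSum_zero)
  have hWle : W ≤ ((LinearMap.range (Aop : H →ₗ[ℂ] H)).topologicalClosure)ᗮ := by
    intro y hy
    rw [Submodule.mem_orthogonal]
    intro u hu
    have hclosed : IsClosed {z : H | (inner ℂ y z : ℂ) = 0} :=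
      isClosed_eq (innerSL ℂ y).continuous continuous_const
    have hsub : (LinearMap.range (Aop : H →ₗ[ℂ] H) : Set H) ⊆ {z : H | (inner ℂ y z : ℂ) = 0} := by
      rintro z ⟨x, rfl⟩
      exact horth y hy x
    have hu' : u ∈ closure (LinearMap.range (Aop : H →ₗ[ℂ] H) : Set H) := hu
    have h0 : (inner ℂ y u : ℂ) = 0 := closure_minimal hsub hclosed hu'
    rw [← inner_conj_symm, h0, map_zero]
  -- W has the same rank as the range of Gop
  have hmul : (ContinuousLinearMap.adjoint (U : H →L[ℂ] H)) * Wi = 1 := by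
    have h1 : Vi * (U : H →L[ℂ] H) = 1 := by rw [hVi]; exact U.inv_mul
    have h2 := congrArg star h1
    rw [star_mul, star_one] at h2
    rw [hWi]
    simpa [ContinuousLinearMap.star_eq_adjoint] using h2
  have hWinj : Function.Injective Wi := by
    intro a b hab
    have h1 : ((ContinuousLinearMap.adjoint (U : H →L[ℂ] H)) * Wi) a
        = ((ContinuousLinearMap.adjoint (U : H →L[ℂ] H)) * Wi) b := by
      simp only [ContinuousLinearMap.mul_apply, hab]
    simpa [hmul] using h1
  have hrkW : Module.rank ℂ (LinearMap.range (Gop : H →ₗ[ℂ] H)) = Module.rank ℂ W :=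
    LinearEquiv.rank_eq (Submodule.equivMapOfInjective (Wi : H →ₗ[ℂ] H) hWinj (LinearMap.range (Gop : H →ₗ[ℂ] H)))
  calc (Module.finrank ℂ (LinearMap.range (Gop : H →ₗ[ℂ] H)) : Cardinal)
      = Module.rank ℂ (LinearMap.range (Gop : H →ₗ[ℂ] H)) := Module.finrank_eq_rank ℂ _
    _ = Module.rank ℂ W := hrkW
    _ ≤ Module.rank ℂ (((LinearMap.range (Aop : H →ₗ[ℂ] H)).topologicalClosure)ᗮ : Submodule ℂ H) :=
        Submodule.rank_mono hWle
end

section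
/- Let H be a Hilbert space and {A_j}_{j=0}^n a finite set of self-adjoint bounded operators on H with A_j of finite rank for j ≠ 0. If ∑_{j=0}^n A_j = I and ∑_{j=1}^n rank A_j ≤ codim(Ran A_0), then each A_j is an orthogonal projection and A_j A_k = 0 for j ≠ k. -/
open scoped InnerProductSpace

/-- Let `{A j}_{j=0}^n` be self-adjoint bounded operators on a complex Hilbert space,
with `A j` of finite rank for `j ≠ 0`. If `∑ A j = I` and
`∑_{j≠0} rank (A j) ≤ codim (Ran (A 0))`, then the `A j` are pairwise orthogonal
projections. -/
theorem selfadjoint_family_orthogonal_projections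
    {H : Type*} [NormedAddCommGroup H] [InnerProductSpace ℂ H] [CompleteSpace H]
    {n : ℕ} (A : Fin (n + 1) → H →L[ℂ] H)
    (hsa : ∀ j, IsSelfAdjoint (A j))
    (hfin : ∀ j, j ≠ 0 → FiniteDimensional ℂ (LinearMap.range (A j : H →ₗ[ℂ] H)))
    (hsum : ∑ j, A j = 1)
    (hrank : ((∑ j ∈ Finset.univ.erase 0, Module.finrank ℂ (LinearMap.range (A j : H →ₗ[ℂ] H)) : ℕ) :
        Cardinal) ≤
      Module.rank ℂ (((LinearMap.range (A 0 : H →ₗ[ℂ] H)).topologicalClosure)ᗮ : Submodule ℂ H)) :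
    (∀ j, IsIdempotentElem (A j)) ∧ ∀ j k, j ≠ k → (A j).comp (A k) = 0 := by
  classical
  set s : Finset (Fin (n + 1)) := Finset.univ.erase 0 with hs
  set R : Fin (n + 1) → Submodule ℂ H :=
    fun j => if j = 0 then ⊥ else LinearMap.range (A j : H →ₗ[ℂ] H) with hR
  haveI hRfin : ∀ j, FiniteDimensional ℂ (R j) := by
    intro j
    by_cases h : j = 0
    · rw [show R j = ⊥ by simp [hR, h]]; infer_instance
    · rw [show R j = LinearMap.range (A j : H →ₗ[ℂ] H) by simp [hR, h]]; exact hfin j h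
  set K : Submodule ℂ H := ((LinearMap.range (A 0 : H →ₗ[ℂ] H)).topologicalClosure)ᗮ with hKdef
  have hsym : ∀ j (x y : H), ⟪A j x, y⟫_ℂ = ⟪x, A j y⟫_ℂ := fun j => (hsa j).isSymmetric
  -- A 0 vanishes on K
  have hA0 : ∀ x ∈ K, A 0 x = 0 := by
    intro x hx
    have h0 : ∀ y : H, ⟪A 0 x, y⟫_ℂ = 0 := by
      intro y
      rw [hsym 0 x y]
      exact (Submodule.mem_orthogonal' _ x).mp hx _
        (Submodule.le_topologicalClosure _ (LinearMap.mem_range_self _ y))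
    have := h0 (A 0 x)
    rwa [inner_self_eq_zero] at this
  -- the sum over s acts as identity on K
  have hsumK : ∀ x ∈ K, ∑ j ∈ s, A j x = x := by
    intro x hx
    have h1 : ∑ j : Fin (n + 1), A j x = x := by
      have := congrArg (fun T : H →L[ℂ] H => T x) hsum
      simpa using this
    rw [hs, Finset.sum_erase_eq_sub (Finset.mem_univ 0), h1, hA0 x hx, sub_zero]
  set V : Submodule ℂ H := s.sup R with hV
  -- members of ranges with j ∈ s
  have hmemR : ∀ j ∈ s, ∀ x : H, A j x ∈ R j := by
    intro j hj x
    have hj0 : j ≠ 0 := (Finset.mem_erase.mp hj).1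
    simp only [hR, if_neg hj0]
    exact LinearMap.mem_range_self _ x
  have hKV : K ≤ V := by
    intro x hx
    rw [← hsumK x hx]
    exact Submodule.sum_mem _ fun j hj => Finset.le_sup (f := R) hj (hmemR j hj x)
  -- finrank of finset sup is at most the sum of finranks
  have hVle : ∀ t : Finset (Fin (n + 1)),
      Module.finrank ℂ (t.sup R : Submodule ℂ H) ≤ ∑ j ∈ t, Module.finrank ℂ (R j) := by
    intro t
    induction t using Finset.induction with
    | empty => simp
    | @insert a t ha ih =>
      rw [Finset.sup_insert, Finset.sum_insert ha]
      exact le_trans (Submodule.finrank_add_le_finrank_add_finrank _ _)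
        (add_le_add_right ih _)
  have hNsum : ∑ j ∈ s, Module.finrank ℂ (LinearMap.range (A j : H →ₗ[ℂ] H)) =
      ∑ j ∈ s, Module.finrank ℂ (R j) := by
    refine Finset.sum_congr rfl fun j hj => ?_
    have hj0 : j ≠ 0 := (Finset.mem_erase.mp hj).1
    rw [show R j = LinearMap.range (A j : H →ₗ[ℂ] H) by simp [hR, hj0]]
  haveI : FiniteDimensional ℂ K := Submodule.finiteDimensional_of_le hKV
  -- dimension count
  have hrank' : ∑ j ∈ s, Module.finrank ℂ (R j) ≤ Module.finrank ℂ K := by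
    rw [← hNsum]
    have := hrank
    rw [← Module.finrank_eq_rank ℂ K] at this
    exact_mod_cast this
  have hKfr : Module.finrank ℂ K ≤ Module.finrank ℂ V := Submodule.finrank_mono hKV
  have hVK : Module.finrank ℂ V ≤ Module.finrank ℂ K :=
    le_trans (hVle s) hrank'
  have hKeqV : K = V := Submodule.eq_of_le_of_finrank_le hKV hVK
  have hVrank : Module.finrank ℂ V = ∑ j ∈ s, Module.finrank ℂ (R j) :=
    le_antisymm (hVle s) (le_trans hrank' hKfr)
  -- independence of the ranges
  have hindep : ∀ i ∈ s, R i ⊓ ((s.erase i).sup R) = ⊥ := by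
    intro i hi
    have hsup : R i ⊔ (s.erase i).sup R = V := by
      rw [hV, ← Finset.sup_insert, Finset.insert_erase hi]
    have heq := Submodule.finrank_sup_add_finrank_inf_eq (R i) ((s.erase i).sup R)
    rw [hsup] at heq
    have h2 := hVle (s.erase i)
    have h3 : ∑ j ∈ s, Module.finrank ℂ (R j) =
        Module.finrank ℂ (R i) + ∑ j ∈ s.erase i, Module.finrank ℂ (R j) :=
      (Finset.add_sum_erase s _ hi).symm
    have h4 : Module.finrank ℂ (R i ⊓ (s.erase i).sup R : Submodule ℂ H) = 0 := by omega
    exact Submodule.finrank_eq_zero.mp h4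
  -- uniqueness of decompositions
  have huniq : ∀ v : Fin (n + 1) → H, (∀ j ∈ s, v j ∈ R j) → ∑ j ∈ s, v j = 0 →
      ∀ i ∈ s, v i = 0 := by
    intro v hv hsum0 i hi
    have h1 : v i = -∑ j ∈ s.erase i, v j := by
      have h := Finset.add_sum_erase s v hi
      rw [hsum0] at h
      exact eq_neg_of_add_eq_zero_left h
    have h2 : v i ∈ (s.erase i).sup R := by
      rw [h1]
      exact Submodule.neg_mem _ (Submodule.sum_mem _ fun j hj =>
        Finset.le_sup (f := R) hj (hv j (Finset.mem_of_mem_erase hj)))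
    have h3 : v i ∈ R i ⊓ (s.erase i).sup R := ⟨hv i hi, h2⟩
    rw [hindep i hi] at h3
    simpa using h3
  -- component computation: A i acts on Ran (A k) as δ_{ik}
  have hcomp : ∀ k ∈ s, ∀ y : H, ∀ i ∈ s, A i (A k y) = if i = k then A k y else 0 := by
    intro k hk y i hi
    set z : H := A k y with hz
    have hzK : z ∈ K := by
      rw [hKeqV]
      exact Finset.le_sup (f := R) hk (hmemR k hk y)
    set v : Fin (n + 1) → H := fun j => A j z - (if j = k then z else 0) with hv
    have hvmem : ∀ j ∈ s, v j ∈ R j := by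
      intro j hj
      by_cases h : j = k
      · subst h
        simp only [hv, if_pos rfl]
        exact Submodule.sub_mem _ (hmemR j hj z) (hmemR j hj y)
      · simp only [hv, if_neg h, sub_zero]
        exact hmemR j hj z
    have hvsum : ∑ j ∈ s, v j = 0 := by
      simp only [hv]
      rw [Finset.sum_sub_distrib, hsumK z hzK, Finset.sum_ite_eq' s k (fun _ => z), if_pos hk,
        sub_self]
    have := huniq v hvmem hvsum i hi
    simp only [hv, sub_eq_zero] at this
    exact this
  -- A 0 kills everything in K (in particular ranges of A j, j ≠ 0)
  have hA0Aj : ∀ j ∈ s, ∀ x : H, A 0 (A j x) = 0 := by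
    intro j hj x
    apply hA0
    rw [hKeqV]
    exact Finset.le_sup (f := R) hj (hmemR j hj x)
  -- A j kills range of A 0, for j ≠ 0
  have hAjA0 : ∀ j ∈ s, ∀ x : H, A j (A 0 x) = 0 := by
    intro j hj x
    have h0 : ∀ w : H, ⟪A j (A 0 x), w⟫_ℂ = 0 := by
      intro w
      rw [hsym j (A 0 x) w]
      have hjw : A j w ∈ K := by
        rw [hKeqV]; exact Finset.le_sup (f := R) hj (hmemR j hj w)
      exact (Submodule.mem_orthogonal _ (A j w)).mp hjw _
        (Submodule.le_topologicalClosure _ (LinearMap.mem_range_self _ x))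
    have := h0 (A j (A 0 x))
    rwa [inner_self_eq_zero] at this
  have hmem_s : ∀ j : Fin (n + 1), j ≠ 0 → j ∈ s := fun j hj =>
    Finset.mem_erase.mpr ⟨hj, Finset.mem_univ j⟩
  constructor
  · intro j
    by_cases hj : j = 0
    · subst hj
      ext x
      show A 0 (A 0 x) = A 0 x
      have hx : A 0 x = x - ∑ i ∈ s, A i x := by
        have h1 : ∑ i : Fin (n + 1), A i x = x := by
          have := congrArg (fun T : H →L[ℂ] H => T x) hsum
          simpa using this
        rw [hs, Finset.sum_erase_eq_sub (Finset.mem_univ 0), h1]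
        abel
      calc A 0 (A 0 x) = A 0 x - ∑ i ∈ s, A 0 (A i x) := by
            rw [hx, map_sub, map_sum, ← hx]
        _ = A 0 x := by
            rw [Finset.sum_eq_zero (fun i hi => hA0Aj i hi x), sub_zero]
    · ext x
      show A j (A j x) = A j x
      have := hcomp j (hmem_s j hj) x j (hmem_s j hj)
      rwa [if_pos rfl] at this
  · intro j k hjk
    ext x
    show A j (A k x) = 0
    by_cases hk : k = 0
    · subst hk
      exact hAjA0 j (hmem_s j hjk) x
    · by_cases hj : j = 0
      · subst hj
        exact hA0Aj k (hmem_s k hk) x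
      · have := hcomp k (hmem_s k hk) x j (hmem_s j hj)
        rwa [if_neg hjk] at this
end

section
/- Let H ∈ L²((−1,1), M_r(ℂ)) with H(−x) = H(x)* a.e., and define F_H(x,t) as the 2r×2r block matrix (1/2)·[[H((x−t)/2), H((x+t)/2)],[H^♯((x+t)/2), H^♯((x−t)/2)]] where H^♯(x) = H(−x). Let 𝓕_H be the integral operator on L²((0,1), ℂ^{2r}) with kernel F_H and 𝓗 the integral operator on L²((0,1), ℂ^r) with kernel H(x−t). Define V : L²((0,1), ℂ^{2r}) → L²((0,1), ℂ^r) by (Vf)(t) = √2 f₂(1−2t) for t ∈ (0,1/2] and (Vf)(t) = √2 f₁(2t−1) for t ∈ (1/2,1). Then V is unitary and I + 𝓗 = V (I + 𝓕_H) V⁻¹. -/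
open Matrix MeasureTheory

attribute [local instance] Matrix.normedAddCommGroup Matrix.normedSpace

noncomputable section
namespace BKUE

lemma map_affine_vol (a b : ℝ) (ha : a ≠ 0) :
    Measure.map (fun x => a * x + b) volume
      = ENNReal.ofReal |a⁻¹| • (volume : Measure ℝ) := by
  have h : (fun x : ℝ => a * x + b) = (fun x => x + b) ∘ (fun x => a * x) := rfl
  rw [h, ← Measure.map_map (by fun_prop) (by fun_prop), Real.map_volume_mul_left ha,
    Measure.map_smul, map_add_right_eq_self]

lemma map_affine_restrict_le (a b : ℝ) (ha : a ≠ 0) {s T : Set ℝ} (hT : MeasurableSet T)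
    (h : Set.MapsTo (fun x => a * x + b) s T) :
    Measure.map (fun x => a * x + b) (volume.restrict s)
      ≤ ENNReal.ofReal |a⁻¹| • volume.restrict T := by
  rw [Measure.le_iff]
  intro A hA
  rw [Measure.map_apply (by fun_prop) hA, Measure.restrict_apply ((by fun_prop : Measurable fun x : ℝ => a*x+b) hA),
    Measure.smul_apply, Measure.restrict_apply hA, smul_eq_mul]
  calc volume ((fun x => a*x+b) ⁻¹' A ∩ s)
      ≤ volume ((fun x => a*x+b) ⁻¹' (A ∩ T)) := by
        apply measure_mono; intro x ⟨hx1, hx2⟩; exact ⟨hx1, h hx2⟩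
    _ = Measure.map (fun x => a*x+b) volume (A ∩ T) := by
        rw [Measure.map_apply (by fun_prop) (hA.inter hT)]
    _ = ENNReal.ofReal |a⁻¹| * volume (A ∩ T) := by rw [map_affine_vol a b ha]; rfl

lemma qmp_affine (a b : ℝ) (ha : a ≠ 0) {s T : Set ℝ} (hT : MeasurableSet T)
    (h : Set.MapsTo (fun x => a * x + b) s T) :
    Measure.QuasiMeasurePreserving (fun x => a * x + b)
      (volume.restrict s) (volume.restrict T) :=
  ⟨by fun_prop, Measure.absolutelyContinuous_of_le_smul (map_affine_restrict_le a b ha hT h)⟩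

lemma memLp_comp_affine {E : Type*} [NormedAddCommGroup E] {p : ENNReal} {g : ℝ → E}
    {T : Set ℝ} (hT : MeasurableSet T) (hg : MemLp g p (volume.restrict T))
    (a b : ℝ) (ha : a ≠ 0) {s : Set ℝ} (h : Set.MapsTo (fun x => a * x + b) s T) :
    MemLp (fun x => g (a * x + b)) p (volume.restrict s) := by
  have hemb : MeasurableEmbedding (fun x : ℝ => a * x + b) :=
    ((Homeomorph.mulLeft₀ a ha).trans (Homeomorph.addRight b)).measurableEmbedding
  have := ((hg.smul_measure (c := ENNReal.ofReal |a⁻¹|) (by simp)).mono_measure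
    (map_affine_restrict_le a b ha hT h))
  exact (hemb.memLp_map_measure_iff.mp this : _)

lemma eucl_norm_sq {ι : Type*} [Fintype ι] (x : EuclideanSpace ℂ ι) :
    ‖x‖ ^ 2 = ∑ i, ‖x i‖ ^ 2 := by
  rw [EuclideanSpace.norm_eq, Real.sq_sqrt (by positivity)]

lemma mul_int {μ : Measure ℝ} {h g : ℝ → ℂ} (hh : MemLp h 2 μ) (hg : MemLp g 2 μ) :
    Integrable (fun t => h t * g t) μ := by
  have hconj : MemLp (fun t => (starRingEnd ℂ) (h t)) 2 μ := by
    refine hh.of_le ?_ (Filter.Eventually.of_forall fun t => by simp)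
    exact RCLike.continuous_conj.comp_aestronglyMeasurable hh.aestronglyMeasurable
  have h1 := L2.integrable_inner (𝕜 := ℂ) (hconj.toLp _) (hg.toLp _)
  refine h1.congr ?_
  filter_upwards [hconj.coeFn_toLp, hg.coeFn_toLp] with t h2 h3
  simp [h2, h3, RCLike.inner_apply, mul_comm]
lemma norm_sq_L2 {α : Type*} [MeasurableSpace α] {μ : Measure α} {E : Type*}
    [NormedAddCommGroup E] [InnerProductSpace ℂ E] (f : Lp E 2 μ) :
    ‖f‖ ^ 2 = ∫ a, ‖(f : α → E) a‖ ^ 2 ∂μ := by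
  rw [← inner_self_eq_norm_sq (𝕜 := ℂ) (f : Lp E 2 μ), L2.inner_def,
    ← integral_re (L2.integrable_inner f f)]
  exact integral_congr_ae (Filter.Eventually.of_forall fun a =>
    (inner_self_eq_norm_sq (𝕜 := ℂ) ((f : α → E) a)))

lemma comp_proj_memℒp {α : Type*} [MeasurableSpace α] {μ : Measure α} {ι : Type*} [Fintype ι]
    {g : α → EuclideanSpace ℂ ι} (hg : MemLp g 2 μ) (j : ι) :
    MemLp (fun x => g x j) 2 μ :=
  (EuclideanSpace.proj (𝕜 := ℂ) j).comp_memLp' hg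

lemma entry_memℒp {r : ℕ} {H : ℝ → Matrix (Fin r) (Fin r) ℂ} {μ : Measure ℝ}
    (hH : MemLp H 2 μ) (i j : Fin r) : MemLp (fun x => H x i j) 2 μ := by
  refine hH.of_le ?_ (Filter.Eventually.of_forall fun x =>
    Matrix.norm_entry_le_entrywise_sup_norm (H x))
  exact (((continuous_apply j).comp (continuous_apply i)).comp_aestronglyMeasurable
    hH.aestronglyMeasurable)

lemma fromBlocks_mulVec_inl {r : ℕ} (A B C D : Matrix (Fin r) (Fin r) ℂ)
    (v : (Fin r ⊕ Fin r) → ℂ) (i : Fin r) :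
    (Matrix.fromBlocks A B C D).mulVec v (Sum.inl i)
      = A.mulVec (fun j => v (Sum.inl j)) i + B.mulVec (fun j => v (Sum.inr j)) i := by
  rw [← Sum.elim_comp_inl_inr v, Matrix.fromBlocks_mulVec]
  simp [Function.comp_def]

lemma fromBlocks_mulVec_inr {r : ℕ} (A B C D : Matrix (Fin r) (Fin r) ℂ)
    (v : (Fin r ⊕ Fin r) → ℂ) (i : Fin r) :
    (Matrix.fromBlocks A B C D).mulVec v (Sum.inr i)
      = C.mulVec (fun j => v (Sum.inl j)) i + D.mulVec (fun j => v (Sum.inr j)) i := by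
  rw [← Sum.elim_comp_inl_inr v, Matrix.fromBlocks_mulVec]
  simp [Function.comp_def]

-- integrability of t ↦ (H (x - t)).mulVec (g t) i  on (0,1)
lemma mulVec_integrable {r : ℕ} {H : ℝ → Matrix (Fin r) (Fin r) ℂ}
    (hH : MemLp H 2 (volume.restrict (Set.Ioo (-1:ℝ) 1)))
    {g : ℝ → EuclideanSpace ℂ (Fin r)} (hg : MemLp g 2 (volume.restrict (Set.Ioo (0:ℝ) 1)))
    (a b : ℝ) (ha : a ≠ 0)
    (hmaps : Set.MapsTo (fun t => a * t + b) (Set.Ioo (0:ℝ) 1) (Set.Ioo (-1:ℝ) 1)) (i : Fin r) :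
    Integrable (fun t => ((H (a * t + b)).mulVec (g t)) i)
      (volume.restrict (Set.Ioo (0:ℝ) 1)) := by
  have : ∀ t, ((H (a * t + b)).mulVec (g t)) i = ∑ j, H (a * t + b) i j * g t j := by
    intro t; rfl
  simp only [this]
  refine integrable_finset_sum _ fun j _ => ?_
  exact mul_int (memLp_comp_affine measurableSet_Ioo (entry_memℒp hH i j) a b ha hmaps)
    (comp_proj_memℒp hg j)

lemma integral_half_left {E : Type*} [NormedAddCommGroup E] [NormedSpace ℝ E] (φ : ℝ → E) :
    ∫ t in Set.Ioc (0:ℝ) (1/2), φ (1 - 2*t) = (2:ℝ)⁻¹ • ∫ s in Set.Ioo (0:ℝ) 1, φ s := by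
  rw [← intervalIntegral.integral_of_le (by norm_num : (0:ℝ) ≤ 1/2)]
  have h : ∀ t : ℝ, (1 - 2*t) = (-2)*t + 1 := fun t => by ring
  simp only [h]
  rw [intervalIntegral.integral_comp_mul_add φ (by norm_num : (-2:ℝ) ≠ 0) 1]
  norm_num
  rw [intervalIntegral.integral_symm, intervalIntegral.integral_of_le (by norm_num : (0:ℝ) ≤ 1),
    integral_Ioc_eq_integral_Ioo, smul_neg, neg_neg]

lemma integral_half_right {E : Type*} [NormedAddCommGroup E] [NormedSpace ℝ E] (φ : ℝ → E) :
    ∫ t in Set.Ioo (1/2:ℝ) 1, φ (2*t - 1) = (2:ℝ)⁻¹ • ∫ s in Set.Ioo (0:ℝ) 1, φ s := by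
  rw [← integral_Ioc_eq_integral_Ioo,
    ← intervalIntegral.integral_of_le (by norm_num : (1/2:ℝ) ≤ 1)]
  have h : ∀ t : ℝ, (2*t - 1) = 2*t + (-1) := fun t => by ring
  simp only [h]
  rw [intervalIntegral.integral_comp_mul_add φ (by norm_num : (2:ℝ) ≠ 0) (-1)]
  norm_num
  rw [intervalIntegral.integral_of_le (by norm_num : (0:ℝ) ≤ 1), integral_Ioc_eq_integral_Ioo]

lemma ae_affine (a b : ℝ) (ha : a ≠ 0) {s T : Set ℝ} (hs : MeasurableSet s)
    (hT : MeasurableSet T) (hmaps : Set.MapsTo (fun x => a * x + b) s T)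
    {p : ℝ → Prop} (hp : ∀ᵐ y ∂volume.restrict T, p y) :
    ∀ᵐ x ∂volume.restrict (Set.Ioo (0:ℝ) 1), x ∈ s → p (a * x + b) := by
  have h1 := (qmp_affine a b ha hT hmaps).ae hp
  exact ae_restrict_of_ae ((ae_restrict_iff' hs).mp h1)

section Main
variable {r : ℕ}

abbrev μ01 : Measure ℝ := volume.restrict (Set.Ioo (0:ℝ) 1)

lemma half_split : Set.Ioc (0:ℝ) (1/2) ∪ Set.Ioo (1/2) 1 = Set.Ioo (0:ℝ) 1 := by
  ext x
  simp only [Set.mem_union, Set.mem_Ioc, Set.mem_Ioo]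
  constructor
  · rintro (⟨h1, h2⟩ | ⟨h1, h2⟩) <;> constructor <;> linarith
  · rintro ⟨h1, h2⟩
    rcases le_or_gt x (1/2) with h | h
    · exact Or.inl ⟨h1, h⟩
    · exact Or.inr ⟨h, h2⟩

lemma half_disj : Disjoint (Set.Ioc (0:ℝ) (1/2)) (Set.Ioo (1/2) 1) := by
  rw [Set.disjoint_left]
  rintro x ⟨_, h2⟩ ⟨h3, _⟩
  linarith

lemma sqrt2_sq : (Real.sqrt 2 : ℂ) * (Real.sqrt 2 : ℂ) = 2 := by
  rw [← Complex.ofReal_mul, Real.mul_self_sqrt (by norm_num)]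
  norm_num

lemma norm_sqrt2_mul_sq (z : ℂ) : ‖(Real.sqrt 2 : ℂ) * z‖ ^ 2 = 2 * ‖z‖ ^ 2 := by
  rw [norm_mul, mul_pow, Complex.norm_real, Real.norm_eq_abs,
    abs_of_nonneg (Real.sqrt_nonneg 2), Real.sq_sqrt (by norm_num)]

lemma V_norm
    (V : Lp (EuclideanSpace ℂ (Fin r ⊕ Fin r)) 2 (volume.restrict (Set.Ioo (0:ℝ) 1)) →L[ℂ]
         Lp (EuclideanSpace ℂ (Fin r)) 2 (volume.restrict (Set.Ioo (0:ℝ) 1)))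
    (hV : ∀ f, ∀ᵐ t ∂(volume.restrict (Set.Ioo (0:ℝ) 1)), ∀ i,
      (V f : ℝ → EuclideanSpace ℂ (Fin r)) t i =
        if t ≤ 1/2 then
          (Real.sqrt 2 : ℂ) *
            (f : ℝ → EuclideanSpace ℂ (Fin r ⊕ Fin r)) (1 - 2*t) (Sum.inr i)
        else
          (Real.sqrt 2 : ℂ) *
            (f : ℝ → EuclideanSpace ℂ (Fin r ⊕ Fin r)) (2*t - 1) (Sum.inl i))
    (f : Lp (EuclideanSpace ℂ (Fin r ⊕ Fin r)) 2 (volume.restrict (Set.Ioo (0:ℝ) 1))) :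
    ‖V f‖ = ‖f‖ := by
  set W : ℝ → EuclideanSpace ℂ (Fin r ⊕ Fin r) := (f : ℝ → _) with hW
  set g1 : ℝ → ℝ := fun s => ∑ i, ‖W s (Sum.inl i)‖ ^ 2 with hg1
  set g2 : ℝ → ℝ := fun s => ∑ i, ‖W s (Sum.inr i)‖ ^ 2 with hg2
  set K : ℝ → ℝ := fun t => if t ≤ 1/2 then 2 * g2 (1 - 2*t) else 2 * g1 (2*t - 1) with hK
  -- step A
  have stepA : ∀ᵐ t ∂μ01, ‖(V f : ℝ → EuclideanSpace ℂ (Fin r)) t‖ ^ 2 = K t := by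
    filter_upwards [hV f] with t ht
    rw [eucl_norm_sq]
    by_cases htle : t ≤ 1/2
    · simp only [hK, if_pos htle]
      rw [hg2, Finset.mul_sum]
      refine Finset.sum_congr rfl fun i _ => ?_
      rw [ht i, if_pos htle, norm_sqrt2_mul_sq]
    · simp only [hK, if_neg htle]
      rw [hg1, Finset.mul_sum]
      refine Finset.sum_congr rfl fun i _ => ?_
      rw [ht i, if_neg htle, norm_sqrt2_mul_sq]
  have hintVf : Integrable (fun t => ‖(V f : ℝ → EuclideanSpace ℂ (Fin r)) t‖ ^ 2) μ01 :=
    (memLp_two_iff_integrable_sq_norm (Lp.aestronglyMeasurable (V f))).mp (Lp.memLp (V f))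
  have hintK : Integrable K μ01 := hintVf.congr stepA
  have hg1int : Integrable g1 μ01 := by
    refine integrable_finset_sum _ fun i _ => ?_
    exact (memLp_two_iff_integrable_sq_norm
      (comp_proj_memℒp (Lp.memLp f) (Sum.inl i)).aestronglyMeasurable).mp
      (comp_proj_memℒp (Lp.memLp f) (Sum.inl i))
  have hg2int : Integrable g2 μ01 := by
    refine integrable_finset_sum _ fun i _ => ?_
    exact (memLp_two_iff_integrable_sq_norm
      (comp_proj_memℒp (Lp.memLp f) (Sum.inr i)).aestronglyMeasurable).mp
      (comp_proj_memℒp (Lp.memLp f) (Sum.inr i))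
  have key : ∫ t in Set.Ioo (0:ℝ) 1, ‖(V f : ℝ → EuclideanSpace ℂ (Fin r)) t‖ ^ 2
      = ∫ s in Set.Ioo (0:ℝ) 1, ‖W s‖ ^ 2 := by
    rw [integral_congr_ae stepA]
    have hsplit : ∫ t in Set.Ioo (0:ℝ) 1, K t
        = (∫ t in Set.Ioc (0:ℝ) (1/2), K t) + ∫ t in Set.Ioo (1/2:ℝ) 1, K t := by
      rw [← half_split, setIntegral_union half_disj measurableSet_Ioo
        ((hintK.mono_measure (Measure.restrict_mono (by rw [← half_split]; exact
          Set.subset_union_left) le_rfl)))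
        ((hintK.mono_measure (Measure.restrict_mono (by rw [← half_split]; exact
          Set.subset_union_right) le_rfl)))]
    rw [hsplit]
    have h1 : ∫ t in Set.Ioc (0:ℝ) (1/2), K t = (2:ℝ)⁻¹ • ∫ s in Set.Ioo (0:ℝ) 1, 2 * g2 s := by
      rw [setIntegral_congr_fun measurableSet_Ioc
        (fun t ht => if_pos ht.2 : Set.EqOn K (fun t => 2 * g2 (1 - 2*t)) _)]
      exact integral_half_left (fun s => 2 * g2 s)
    have h2 : ∫ t in Set.Ioo (1/2:ℝ) 1, K t = (2:ℝ)⁻¹ • ∫ s in Set.Ioo (0:ℝ) 1, 2 * g1 s := by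
      rw [setIntegral_congr_fun measurableSet_Ioo
        (fun t ht => if_neg (not_le.mpr ht.1) : Set.EqOn K (fun t => 2 * g1 (2*t - 1)) _)]
      exact integral_half_right (fun s => 2 * g1 s)
    rw [h1, h2, integral_const_mul, integral_const_mul, smul_eq_mul, smul_eq_mul]
    have : ∀ s, ‖W s‖ ^ 2 = g1 s + g2 s := by
      intro s
      rw [eucl_norm_sq, Fintype.sum_sum_type]
    simp only [this]
    rw [integral_add hg1int hg2int]
    ring
  have hVn := norm_sq_L2 (V f)
  have hfn := norm_sq_L2 f
  have : ‖V f‖ ^ 2 = ‖f‖ ^ 2 := by rw [hVn, hfn]; exact key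
  nlinarith [norm_nonneg (V f), norm_nonneg f]

lemma norm_invsqrt2_mul_sq (z : ℂ) : ‖((Real.sqrt 2 : ℂ))⁻¹ * z‖ ^ 2 = 2⁻¹ * ‖z‖ ^ 2 := by
  rw [norm_mul, mul_pow, norm_inv, Complex.norm_real, Real.norm_eq_abs,
    abs_of_nonneg (Real.sqrt_nonneg 2), inv_pow, Real.sq_sqrt (by norm_num)]

lemma sqrt2_ne : (Real.sqrt 2 : ℂ) ≠ 0 := by
  simp [Real.sqrt_eq_zero']

lemma ae_ne_half : ∀ᵐ t ∂μ01, t ≠ (1/2 : ℝ) := by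
  refine ae_restrict_of_ae ?_
  rw [ae_iff]
  have : {t : ℝ | ¬t ≠ 1/2} = {(1/2 : ℝ)} := by ext t; simp
  rw [this]
  exact Real.volume_singleton

lemma V_surj
    (V : Lp (EuclideanSpace ℂ (Fin r ⊕ Fin r)) 2 (volume.restrict (Set.Ioo (0:ℝ) 1)) →L[ℂ]
         Lp (EuclideanSpace ℂ (Fin r)) 2 (volume.restrict (Set.Ioo (0:ℝ) 1)))
    (hV : ∀ f, ∀ᵐ t ∂(volume.restrict (Set.Ioo (0:ℝ) 1)), ∀ i,
      (V f : ℝ → EuclideanSpace ℂ (Fin r)) t i =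
        if t ≤ 1/2 then
          (Real.sqrt 2 : ℂ) *
            (f : ℝ → EuclideanSpace ℂ (Fin r ⊕ Fin r)) (1 - 2*t) (Sum.inr i)
        else
          (Real.sqrt 2 : ℂ) *
            (f : ℝ → EuclideanSpace ℂ (Fin r ⊕ Fin r)) (2*t - 1) (Sum.inl i)) :
    Function.Surjective V := by
  intro g
  set G : ℝ → EuclideanSpace ℂ (Fin r) := (g : ℝ → _) with hG
  set Ψ : EuclideanSpace ℂ (Fin r) × EuclideanSpace ℂ (Fin r) →
      EuclideanSpace ℂ (Fin r ⊕ Fin r) := fun uv =>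
    WithLp.toLp 2 (fun j => Sum.casesOn j (fun i => ((Real.sqrt 2 : ℂ))⁻¹ * uv.1 i)
      (fun i => ((Real.sqrt 2 : ℂ))⁻¹ * uv.2 i)) with hΨdef
  have hΨc : Continuous Ψ := by
    have : Ψ = (EuclideanSpace.equiv (Fin r ⊕ Fin r) ℂ).symm ∘
        (fun uv (j : Fin r ⊕ Fin r) => Sum.casesOn j
          (fun i => ((Real.sqrt 2 : ℂ))⁻¹ * uv.1 i)
          (fun i => ((Real.sqrt 2 : ℂ))⁻¹ * uv.2 i)) := rfl
    rw [this]
    refine ((EuclideanSpace.equiv (Fin r ⊕ Fin r) ℂ).symm.continuous).comp ?_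
    refine continuous_pi fun j => ?_
    rcases j with i | i
    · exact continuous_const.mul ((EuclideanSpace.proj (𝕜 := ℂ) i).continuous.comp
        continuous_fst)
    · exact continuous_const.mul ((EuclideanSpace.proj (𝕜 := ℂ) i).continuous.comp
        continuous_snd)
  set φ : ℝ → EuclideanSpace ℂ (Fin r ⊕ Fin r) := fun s =>
    Ψ (G ((1:ℝ)/2 * s + 1/2), G ((-(1:ℝ)/2) * s + 1/2)) with hφdef
  have hmaps1 : Set.MapsTo (fun s : ℝ => (1:ℝ)/2 * s + 1/2) (Set.Ioo 0 1) (Set.Ioo 0 1) := by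
    intro s hs; constructor <;> [linarith [hs.1]; linarith [hs.2]]
  have hmaps2 : Set.MapsTo (fun s : ℝ => (-(1:ℝ)/2) * s + 1/2) (Set.Ioo 0 1) (Set.Ioo 0 1) := by
    intro s hs; constructor <;> [linarith [hs.2]; linarith [hs.1]]
  have hc1 : MemLp (fun s => G ((1:ℝ)/2 * s + 1/2)) 2 μ01 :=
    memLp_comp_affine measurableSet_Ioo (Lp.memLp g) _ _ (by norm_num) hmaps1
  have hc2 : MemLp (fun s => G ((-(1:ℝ)/2) * s + 1/2)) 2 μ01 :=
    memLp_comp_affine measurableSet_Ioo (Lp.memLp g) _ _ (by norm_num) hmaps2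
  have hφm : AEStronglyMeasurable φ μ01 :=
    hΨc.comp_aestronglyMeasurable (hc1.aestronglyMeasurable.prodMk hc2.aestronglyMeasurable)
  have hnorm : ∀ s, ‖φ s‖ ^ 2
      = 2⁻¹ * ‖G ((1:ℝ)/2 * s + 1/2)‖ ^ 2 + 2⁻¹ * ‖G ((-(1:ℝ)/2) * s + 1/2)‖ ^ 2 := by
    intro s
    rw [eucl_norm_sq, Fintype.sum_sum_type]
    have e1 : ∀ y : ℝ, (∑ i, ‖((Real.sqrt 2 : ℂ))⁻¹ * G y i‖ ^ 2) = 2⁻¹ * ‖G y‖ ^ 2 := by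
      intro y
      rw [eucl_norm_sq (G y), Finset.mul_sum]
      exact Finset.sum_congr rfl fun i _ => norm_invsqrt2_mul_sq _
    rw [← e1, ← e1]
  have hφ2 : MemLp φ 2 μ01 := by
    refine (memLp_two_iff_integrable_sq_norm hφm).mpr ?_
    have h1 := (memLp_two_iff_integrable_sq_norm hc1.aestronglyMeasurable).mp hc1
    have h2 := (memLp_two_iff_integrable_sq_norm hc2.aestronglyMeasurable).mp hc2
    refine (((h1.const_mul (2⁻¹:ℝ)).add (h2.const_mul (2⁻¹:ℝ))).congr ?_)
    exact Filter.Eventually.of_forall fun s => (hnorm s).symm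
  obtain ⟨f, hcoe⟩ : ∃ f : Lp (EuclideanSpace ℂ (Fin r ⊕ Fin r)) 2 μ01,
      (f : ℝ → EuclideanSpace ℂ (Fin r ⊕ Fin r)) =ᵐ[μ01] φ :=
    ⟨hφ2.toLp φ, hφ2.coeFn_toLp⟩
  refine ⟨f, Lp.ext ?_⟩
  have hA : ∀ᵐ t ∂μ01, t ∈ Set.Ioo (0:ℝ) (1/2) →
      (f : ℝ → EuclideanSpace ℂ (Fin r ⊕ Fin r)) ((-2:ℝ) * t + 1) = φ ((-2:ℝ)*t + 1) := by
    refine ae_affine (p := fun y => (f : ℝ → EuclideanSpace ℂ (Fin r ⊕ Fin r)) y = φ y)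
      (-2) 1 (by norm_num) measurableSet_Ioo measurableSet_Ioo ?_ hcoe
    intro t ht
    constructor
    · show (0:ℝ) < -2*t + 1; linarith [ht.2]
    · show (-2:ℝ)*t + 1 < 1; linarith [ht.1]
  have hB : ∀ᵐ t ∂μ01, t ∈ Set.Ioo (1/2:ℝ) 1 →
      (f : ℝ → EuclideanSpace ℂ (Fin r ⊕ Fin r)) ((2:ℝ) * t + (-1)) = φ ((2:ℝ)*t + (-1)) := by
    refine ae_affine (p := fun y => (f : ℝ → EuclideanSpace ℂ (Fin r ⊕ Fin r)) y = φ y)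
      2 (-1) (by norm_num) measurableSet_Ioo measurableSet_Ioo ?_ hcoe
    intro t ht
    constructor
    · show (0:ℝ) < 2*t + (-1); linarith [ht.1]
    · show (2:ℝ)*t + (-1) < 1; linarith [ht.2]
  filter_upwards [hV f, hA, hB, ae_ne_half,
    ae_restrict_mem (μ := volume) measurableSet_Ioo] with t h1 h2 h3 h4 h5
  refine PiLp.ext fun i => ?_
  rw [h1 i]
  by_cases hle : t ≤ 1/2
  · have ht' : t ∈ Set.Ioo (0:ℝ) (1/2) := ⟨h5.1, lt_of_le_of_ne hle h4⟩
    rw [if_pos hle, show (1 - 2*t : ℝ) = (-2:ℝ)*t + 1 by ring, h2 ht']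
    show (Real.sqrt 2 : ℂ) * (((Real.sqrt 2 : ℂ))⁻¹ *
      G ((-(1:ℝ)/2) * ((-2:ℝ)*t + 1) + 1/2) i) = G t i
    rw [← mul_assoc, mul_inv_cancel₀ sqrt2_ne, one_mul,
      show (-(1:ℝ)/2) * ((-2:ℝ)*t + 1) + 1/2 = t by ring]
  · have ht' : t ∈ Set.Ioo (1/2:ℝ) 1 := ⟨lt_of_not_ge hle, h5.2⟩
    rw [if_neg hle, show (2*t - 1 : ℝ) = (2:ℝ)*t + (-1) by ring, h3 ht']
    show (Real.sqrt 2 : ℂ) * (((Real.sqrt 2 : ℂ))⁻¹ *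
      G ((1:ℝ)/2 * ((2:ℝ)*t + (-1)) + 1/2) i) = G t i
    rw [← mul_assoc, mul_inv_cancel₀ sqrt2_ne, one_mul,
      show (1:ℝ)/2 * ((2:ℝ)*t + (-1)) + 1/2 = t by ring]

lemma mulVec_integrable' {H : ℝ → Matrix (Fin r) (Fin r) ℂ}
    (hH : MemLp H 2 (volume.restrict (Set.Ioo (-1:ℝ) 1)))
    (v : ℝ → Fin r → ℂ) (hv : ∀ j, MemLp (fun t => v t j) 2 μ01)
    (a b : ℝ) (ha : a ≠ 0)
    (hmaps : Set.MapsTo (fun t => a * t + b) (Set.Ioo (0:ℝ) 1) (Set.Ioo (-1:ℝ) 1)) (i : Fin r) :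
    Integrable (fun t => ((H (a * t + b)).mulVec (v t)) i) μ01 := by
  have : ∀ t, ((H (a * t + b)).mulVec (v t)) i = ∑ j, H (a * t + b) i j * v t j :=
    fun t => rfl
  simp only [this]
  refine integrable_finset_sum _ fun j _ => ?_
  exact mul_int (memLp_comp_affine measurableSet_Ioo (entry_memℒp hH i j) a b ha hmaps) (hv j)

lemma intertwine
    (H : ℝ → Matrix (Fin r) (Fin r) ℂ)
    (hH : MemLp H 2 (volume.restrict (Set.Ioo (-1:ℝ) 1)))
    (F : ℝ → ℝ → Matrix (Fin r ⊕ Fin r) (Fin r ⊕ Fin r) ℂ)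
    (hF : ∀ x t, F x t = (1/2 : ℂ) •
      Matrix.fromBlocks (H ((x - t)/2)) (H ((x + t)/2))
        (H (-((x + t)/2))) (H (-((x - t)/2))))
    (𝓕 : Lp (EuclideanSpace ℂ (Fin r ⊕ Fin r)) 2 (volume.restrict (Set.Ioo (0:ℝ) 1)) →L[ℂ]
         Lp (EuclideanSpace ℂ (Fin r ⊕ Fin r)) 2 (volume.restrict (Set.Ioo (0:ℝ) 1)))
    (h𝓕 : ∀ f, ∀ᵐ x ∂(volume.restrict (Set.Ioo (0:ℝ) 1)), ∀ i,
      (𝓕 f : ℝ → EuclideanSpace ℂ (Fin r ⊕ Fin r)) x i =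
        ∫ s in Set.Ioo (0:ℝ) 1,
          ((F x s).mulVec ((f : ℝ → EuclideanSpace ℂ (Fin r ⊕ Fin r)) s)) i)
    (𝓗 : Lp (EuclideanSpace ℂ (Fin r)) 2 (volume.restrict (Set.Ioo (0:ℝ) 1)) →L[ℂ]
         Lp (EuclideanSpace ℂ (Fin r)) 2 (volume.restrict (Set.Ioo (0:ℝ) 1)))
    (h𝓗 : ∀ g, ∀ᵐ x ∂(volume.restrict (Set.Ioo (0:ℝ) 1)), ∀ i,
      (𝓗 g : ℝ → EuclideanSpace ℂ (Fin r)) x i =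
        ∫ t in Set.Ioo (0:ℝ) 1,
          ((H (x - t)).mulVec ((g : ℝ → EuclideanSpace ℂ (Fin r)) t)) i)
    (V : Lp (EuclideanSpace ℂ (Fin r ⊕ Fin r)) 2 (volume.restrict (Set.Ioo (0:ℝ) 1)) →L[ℂ]
         Lp (EuclideanSpace ℂ (Fin r)) 2 (volume.restrict (Set.Ioo (0:ℝ) 1)))
    (hV : ∀ f, ∀ᵐ t ∂(volume.restrict (Set.Ioo (0:ℝ) 1)), ∀ i,
      (V f : ℝ → EuclideanSpace ℂ (Fin r)) t i =
        if t ≤ 1/2 then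
          (Real.sqrt 2 : ℂ) *
            (f : ℝ → EuclideanSpace ℂ (Fin r ⊕ Fin r)) (1 - 2*t) (Sum.inr i)
        else
          (Real.sqrt 2 : ℂ) *
            (f : ℝ → EuclideanSpace ℂ (Fin r ⊕ Fin r)) (2*t - 1) (Sum.inl i))
    (f : Lp (EuclideanSpace ℂ (Fin r ⊕ Fin r)) 2 (volume.restrict (Set.Ioo (0:ℝ) 1))) :
    𝓗 (V f) = V (𝓕 f) := by
  apply Lp.ext (p := (2:ENNReal)) (μ := μ01)
  set A : ℝ → Fin r → ℝ → ℂ :=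
    fun x i s => ((H (x - (1+s)/2)).mulVec (fun j => (f : ℝ → EuclideanSpace ℂ (Fin r ⊕ Fin r)) s (Sum.inl j))) i with hA
  set B : ℝ → Fin r → ℝ → ℂ :=
    fun x i s => ((H (x - (1-s)/2)).mulVec (fun j => (f : ℝ → EuclideanSpace ℂ (Fin r ⊕ Fin r)) s (Sum.inr j))) i with hB
  have hIa : ∀ x ∈ Set.Ioo (0:ℝ) 1, ∀ i, Integrable (A x i) μ01 := by
    intro x hx i
    have h0 := mulVec_integrable' hH (fun s j => (f : ℝ → EuclideanSpace ℂ (Fin r ⊕ Fin r)) s (Sum.inl j))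
      (fun j => comp_proj_memℒp (Lp.memLp f) (Sum.inl j)) (-(1:ℝ)/2) (x - 1/2)
      (by norm_num) (fun s hs => ⟨by show (-1:ℝ) < -(1:ℝ)/2 * s + (x - 1/2); nlinarith [hs.1, hs.2, hx.1, hx.2],
        by show -(1:ℝ)/2 * s + (x - 1/2) < 1; nlinarith [hs.1, hs.2, hx.1, hx.2]⟩) i
    refine h0.congr (Filter.Eventually.of_forall fun s => ?_)
    simp only [hA, show ∀ s:ℝ, -(1:ℝ)/2 * s + (x - 1/2) = x - (1+s)/2 from fun s => by ring]
  have hIb : ∀ x ∈ Set.Ioo (0:ℝ) 1, ∀ i, Integrable (B x i) μ01 := by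
    intro x hx i
    have h0 := mulVec_integrable' hH (fun s j => (f : ℝ → EuclideanSpace ℂ (Fin r ⊕ Fin r)) s (Sum.inr j))
      (fun j => comp_proj_memℒp (Lp.memLp f) (Sum.inr j)) ((1:ℝ)/2) (x - 1/2)
      (by norm_num) (fun s hs => ⟨by show (-1:ℝ) < (1:ℝ)/2 * s + (x - 1/2); nlinarith [hs.1, hs.2, hx.1, hx.2],
        by show (1:ℝ)/2 * s + (x - 1/2) < 1; nlinarith [hs.1, hs.2, hx.1, hx.2]⟩) i
    refine h0.congr (Filter.Eventually.of_forall fun s => ?_)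
    simp only [hB, show ∀ s:ℝ, (1:ℝ)/2 * s + (x - 1/2) = x - (1-s)/2 from fun s => by ring]
  -- LHS
  have hLHS : ∀ᵐ x ∂μ01, ∀ i, (𝓗 (V f) : ℝ → EuclideanSpace ℂ (Fin r)) x i
      = (2:ℝ)⁻¹ • ((Real.sqrt 2 : ℂ) * ∫ s in Set.Ioo (0:ℝ) 1, B x i s)
        + (2:ℝ)⁻¹ • ((Real.sqrt 2 : ℂ) * ∫ s in Set.Ioo (0:ℝ) 1, A x i s) := by
    filter_upwards [h𝓗 (V f), ae_restrict_mem (μ := volume) measurableSet_Ioo] with x h1 hx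
    intro i
    rw [h1 i]
    set K : ℝ → ℂ := fun t => if t ≤ 1/2
      then (Real.sqrt 2 : ℂ) * ((H (x-t)).mulVec (fun j => (f : ℝ → EuclideanSpace ℂ (Fin r ⊕ Fin r)) (1-2*t) (Sum.inr j))) i
      else (Real.sqrt 2 : ℂ) * ((H (x-t)).mulVec (fun j => (f : ℝ → EuclideanSpace ℂ (Fin r ⊕ Fin r)) (2*t-1) (Sum.inl j))) i with hK
    have eae : (fun t => ((H (x-t)).mulVec ((V f : ℝ → EuclideanSpace ℂ (Fin r)) t)) i) =ᵐ[μ01] K := by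
      filter_upwards [hV f] with t ht
      by_cases hle : t ≤ 1/2
      · have hGt : (V f : ℝ → EuclideanSpace ℂ (Fin r)) t = (Real.sqrt 2 : ℂ) • (fun j => (f : ℝ → EuclideanSpace ℂ (Fin r ⊕ Fin r)) (1-2*t) (Sum.inr j)) := by
          funext j; rw [ht j, if_pos hle]; rfl
        simp only [hK, if_pos hle]
        rw [hGt, Matrix.mulVec_smul, Pi.smul_apply, smul_eq_mul]
      · have hGt : (V f : ℝ → EuclideanSpace ℂ (Fin r)) t = (Real.sqrt 2 : ℂ) • (fun j => (f : ℝ → EuclideanSpace ℂ (Fin r ⊕ Fin r)) (2*t-1) (Sum.inl j)) := by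
          funext j; rw [ht j, if_neg hle]; rfl
        simp only [hK, if_neg hle]
        rw [hGt, Matrix.mulVec_smul, Pi.smul_apply, smul_eq_mul]
    have e0 : ∫ t in Set.Ioo (0:ℝ) 1, ((H (x-t)).mulVec ((V f : ℝ → EuclideanSpace ℂ (Fin r)) t)) i = ∫ t in Set.Ioo (0:ℝ) 1, K t :=
      integral_congr_ae eae
    have hKint : Integrable K μ01 := by
      have h0 := mulVec_integrable' hH (fun t j => (V f : ℝ → EuclideanSpace ℂ (Fin r)) t j)
        (fun j => comp_proj_memℒp (Lp.memLp (V f)) j) (-1) x (by norm_num)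
        (fun t ht => ⟨by show (-1:ℝ) < (-1:ℝ)*t + x; nlinarith [ht.1, ht.2, hx.1, hx.2],
          by show (-1:ℝ)*t + x < 1; nlinarith [ht.1, ht.2, hx.1, hx.2]⟩) i
      have h0' : Integrable (fun t => ((H (x - t)).mulVec ((V f : ℝ → EuclideanSpace ℂ (Fin r)) t)) i) μ01 := by
        refine h0.congr (Filter.Eventually.of_forall fun t => ?_)
        simp only [show ∀ t:ℝ, (-1:ℝ)*t + x = x - t from fun t => by ring]
      exact h0'.congr eae
    have hsplit : ∫ t in Set.Ioo (0:ℝ) 1, K t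
        = (∫ t in Set.Ioc (0:ℝ) (1/2), K t) + ∫ t in Set.Ioo (1/2:ℝ) 1, K t := by
      rw [← half_split, setIntegral_union half_disj measurableSet_Ioo
        ((hKint.mono_measure (Measure.restrict_mono (by rw [← half_split]; exact
          Set.subset_union_left) le_rfl)))
        ((hKint.mono_measure (Measure.restrict_mono (by rw [← half_split]; exact
          Set.subset_union_right) le_rfl)))]
    have p1 : ∫ t in Set.Ioc (0:ℝ) (1/2), K t
        = (2:ℝ)⁻¹ • ∫ s in Set.Ioo (0:ℝ) 1, (Real.sqrt 2 : ℂ) * B x i s := by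
      rw [setIntegral_congr_fun measurableSet_Ioc
        (fun t ht => ?_ : Set.EqOn K (fun t => (Real.sqrt 2 : ℂ) * B x i (1 - 2*t)) _)]
      · exact integral_half_left (fun s => (Real.sqrt 2 : ℂ) * B x i s)
      · simp only [hK, hB, if_pos ht.2, show (1 - (1-2*t))/2 = t from by ring]
    have p2 : ∫ t in Set.Ioo (1/2:ℝ) 1, K t
        = (2:ℝ)⁻¹ • ∫ s in Set.Ioo (0:ℝ) 1, (Real.sqrt 2 : ℂ) * A x i s := by
      rw [setIntegral_congr_fun measurableSet_Ioo
        (fun t ht => ?_ : Set.EqOn K (fun t => (Real.sqrt 2 : ℂ) * A x i (2*t - 1)) _)]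
      · exact integral_half_right (fun s => (Real.sqrt 2 : ℂ) * A x i s)
      · simp only [hK, hA, if_neg (not_le.mpr ht.1), show (1 + (2*t-1))/2 = t from by ring]
    rw [e0, hsplit, p1, p2, integral_const_mul, integral_const_mul]
  -- RHS
  have hFa : ∀ᵐ x ∂μ01, x ∈ Set.Ioo (0:ℝ) (1/2) → ∀ i2,
      (𝓕 f : ℝ → EuclideanSpace ℂ (Fin r ⊕ Fin r)) ((-2:ℝ)*x+1) i2
        = ∫ s in Set.Ioo (0:ℝ) 1, ((F ((-2:ℝ)*x+1) s).mulVec ((f : ℝ → EuclideanSpace ℂ (Fin r ⊕ Fin r)) s)) i2 := by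
    refine ae_affine (p := fun y => ∀ i2,
      (𝓕 f : ℝ → EuclideanSpace ℂ (Fin r ⊕ Fin r)) y i2
        = ∫ s in Set.Ioo (0:ℝ) 1, ((F y s).mulVec ((f : ℝ → EuclideanSpace ℂ (Fin r ⊕ Fin r)) s)) i2)
      (-2) 1 (by norm_num) measurableSet_Ioo measurableSet_Ioo ?_ (h𝓕 f)
    intro t ht
    constructor
    · show (0:ℝ) < -2*t + 1; linarith [ht.2]
    · show (-2:ℝ)*t + 1 < 1; linarith [ht.1]
  have hFb : ∀ᵐ x ∂μ01, x ∈ Set.Ioo (1/2:ℝ) 1 → ∀ i2,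
      (𝓕 f : ℝ → EuclideanSpace ℂ (Fin r ⊕ Fin r)) ((2:ℝ)*x+(-1)) i2
        = ∫ s in Set.Ioo (0:ℝ) 1, ((F ((2:ℝ)*x+(-1)) s).mulVec ((f : ℝ → EuclideanSpace ℂ (Fin r ⊕ Fin r)) s)) i2 := by
    refine ae_affine (p := fun y => ∀ i2,
      (𝓕 f : ℝ → EuclideanSpace ℂ (Fin r ⊕ Fin r)) y i2
        = ∫ s in Set.Ioo (0:ℝ) 1, ((F y s).mulVec ((f : ℝ → EuclideanSpace ℂ (Fin r ⊕ Fin r)) s)) i2)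
      2 (-1) (by norm_num) measurableSet_Ioo measurableSet_Ioo ?_ (h𝓕 f)
    intro t ht
    constructor
    · show (0:ℝ) < 2*t + (-1); linarith [ht.1]
    · show (2:ℝ)*t + (-1) < 1; linarith [ht.2]
  have hRHS : ∀ᵐ x ∂μ01, ∀ i, (V (𝓕 f) : ℝ → EuclideanSpace ℂ (Fin r)) x i
      = (Real.sqrt 2 : ℂ) * ((1/2 : ℂ)
          * ((∫ s in Set.Ioo (0:ℝ) 1, A x i s) + ∫ s in Set.Ioo (0:ℝ) 1, B x i s)) := by
    filter_upwards [hV (𝓕 f), hFa, hFb, ae_ne_half,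
      ae_restrict_mem (μ := volume) measurableSet_Ioo] with x h2 ha hb hne hx
    intro i
    rw [h2 i]
    by_cases hle : x ≤ 1/2
    · have hx' : x ∈ Set.Ioo (0:ℝ) (1/2) := ⟨hx.1, lt_of_le_of_ne hle hne⟩
      rw [if_pos hle, show (1 - 2*x:ℝ) = -2*x+1 by ring, ha hx' (Sum.inr i)]
      have ptw : ∀ s, ((F ((-2:ℝ)*x+1) s).mulVec ((f : ℝ → EuclideanSpace ℂ (Fin r ⊕ Fin r)) s)) (Sum.inr i)
          = (1/2 : ℂ) * (A x i s + B x i s) := by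
        intro s
        rw [hF, Matrix.smul_mulVec, Pi.smul_apply, smul_eq_mul, fromBlocks_mulVec_inr,
          show (-((((-2:ℝ)*x+1) + s)/2)) = x - (1+s)/2 by ring,
          show (-((((-2:ℝ)*x+1) - s)/2)) = x - (1-s)/2 by ring]
      rw [integral_congr_ae (Filter.Eventually.of_forall ptw), integral_const_mul,
        integral_add (hIa x hx i) (hIb x hx i)]
    · have hx' : x ∈ Set.Ioo (1/2:ℝ) 1 := ⟨lt_of_not_ge hle, hx.2⟩
      rw [if_neg hle, show (2*x - 1:ℝ) = 2*x+(-1) by ring, hb hx' (Sum.inl i)]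
      have ptw : ∀ s, ((F ((2:ℝ)*x+(-1)) s).mulVec ((f : ℝ → EuclideanSpace ℂ (Fin r ⊕ Fin r)) s)) (Sum.inl i)
          = (1/2 : ℂ) * (A x i s + B x i s) := by
        intro s
        rw [hF, Matrix.smul_mulVec, Pi.smul_apply, smul_eq_mul, fromBlocks_mulVec_inl,
          show ((((2:ℝ)*x+(-1)) - s)/2) = x - (1+s)/2 by ring,
          show ((((2:ℝ)*x+(-1)) + s)/2) = x - (1-s)/2 by ring]
      rw [integral_congr_ae (Filter.Eventually.of_forall ptw), integral_const_mul,
        integral_add (hIa x hx i) (hIb x hx i)]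
  filter_upwards [hLHS, hRHS] with x e1 e2
  refine PiLp.ext fun i => ?_
  rw [e1 i, e2 i, Complex.real_smul, Complex.real_smul]
  push_cast
  ring

end Main

end BKUE
end


/-- Let `H ∈ L²((−1,1), M_r(ℂ))` with `H(−x) = H(x)*` a.e., `F_H` the block kernel
`(1/2)[[H((x−t)/2), H((x+t)/2)],[H^♯((x+t)/2), H^♯((x−t)/2)]]`, `𝓕_H` the corresponding
integral operator on `L²((0,1), ℂ^{2r})` and `𝓗` the integral operator on
`L²((0,1), ℂ^r)` with kernel `H(x−t)`. Then `V`, defined by `(Vf)(t) = √2 f₂(1−2t)` for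
`t ≤ 1/2` and `(Vf)(t) = √2 f₁(2t−1)` for `t > 1/2`, is unitary and
`I + 𝓗 = V (I + 𝓕_H) V⁻¹`. -/
theorem block_kernel_unitary_equivalence (r : ℕ)
    (H : ℝ → Matrix (Fin r) (Fin r) ℂ)
    (hH : MemLp H 2 (volume.restrict (Set.Ioo (-1:ℝ) 1)))
    (hHsym : ∀ᵐ x ∂(volume.restrict (Set.Ioo (-1:ℝ) 1)), H (-x) = (H x)ᴴ)
    (F : ℝ → ℝ → Matrix (Fin r ⊕ Fin r) (Fin r ⊕ Fin r) ℂ)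
    (hF : ∀ x t, F x t = (1/2 : ℂ) •
      Matrix.fromBlocks (H ((x - t)/2)) (H ((x + t)/2))
        (H (-((x + t)/2))) (H (-((x - t)/2))))
    (𝓕 : Lp (EuclideanSpace ℂ (Fin r ⊕ Fin r)) 2 (volume.restrict (Set.Ioo (0:ℝ) 1)) →L[ℂ]
         Lp (EuclideanSpace ℂ (Fin r ⊕ Fin r)) 2 (volume.restrict (Set.Ioo (0:ℝ) 1)))
    (h𝓕 : ∀ f, ∀ᵐ x ∂(volume.restrict (Set.Ioo (0:ℝ) 1)), ∀ i,
      (𝓕 f : ℝ → EuclideanSpace ℂ (Fin r ⊕ Fin r)) x i =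
        ∫ s in Set.Ioo (0:ℝ) 1,
          ((F x s).mulVec ((f : ℝ → EuclideanSpace ℂ (Fin r ⊕ Fin r)) s)) i)
    (𝓗 : Lp (EuclideanSpace ℂ (Fin r)) 2 (volume.restrict (Set.Ioo (0:ℝ) 1)) →L[ℂ]
         Lp (EuclideanSpace ℂ (Fin r)) 2 (volume.restrict (Set.Ioo (0:ℝ) 1)))
    (h𝓗 : ∀ g, ∀ᵐ x ∂(volume.restrict (Set.Ioo (0:ℝ) 1)), ∀ i,
      (𝓗 g : ℝ → EuclideanSpace ℂ (Fin r)) x i =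
        ∫ t in Set.Ioo (0:ℝ) 1,
          ((H (x - t)).mulVec ((g : ℝ → EuclideanSpace ℂ (Fin r)) t)) i)
    (V : Lp (EuclideanSpace ℂ (Fin r ⊕ Fin r)) 2 (volume.restrict (Set.Ioo (0:ℝ) 1)) →L[ℂ]
         Lp (EuclideanSpace ℂ (Fin r)) 2 (volume.restrict (Set.Ioo (0:ℝ) 1)))
    (hV : ∀ f, ∀ᵐ t ∂(volume.restrict (Set.Ioo (0:ℝ) 1)), ∀ i,
      (V f : ℝ → EuclideanSpace ℂ (Fin r)) t i =
        if t ≤ 1/2 then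
          (Real.sqrt 2 : ℂ) *
            (f : ℝ → EuclideanSpace ℂ (Fin r ⊕ Fin r)) (1 - 2*t) (Sum.inr i)
        else
          (Real.sqrt 2 : ℂ) *
            (f : ℝ → EuclideanSpace ℂ (Fin r ⊕ Fin r)) (2*t - 1) (Sum.inl i)) :
    (∀ f, ‖V f‖ = ‖f‖) ∧ Function.Bijective V ∧
      ∀ f, (1 + 𝓗) (V f) = V ((1 + 𝓕) f) := by
  have hnorm := BKUE.V_norm V hV
  refine ⟨hnorm, ⟨?_, BKUE.V_surj V hV⟩, ?_⟩
  · intro a b hab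
    have h0 : ‖V (a - b)‖ = ‖a - b‖ := hnorm (a - b)
    rw [map_sub, hab, sub_self, norm_zero] at h0
    exact sub_eq_zero.mp (norm_eq_zero.mp h0.symm)
  · intro f
    have hkey := BKUE.intertwine H hH F hF 𝓕 h𝓕 𝓗 h𝓗 V hV f
    simp only [ContinuousLinearMap.add_apply, ContinuousLinearMap.one_apply, map_add]
    rw [hkey]
end
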